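/- arXiv:1210.5189 — 10 statements merged into one kernel-verified Lean document; each statement's English description precedes it below -/
import Mathlib

section
/- The growth rate of the odd model is √2; that is, lim_{N→∞} (Zodd(N))^(1/N²) = √2. -/
open Filter

/-- The odd constraint: any two `⊖` spins (`false`) in the same row or column
with only `⊕` spins (`true`) strictly between them are separated by an odd
number of `⊕` spins. -/
def OddConstraint (N : ℕ) (x : Fin N × Fin N → Bool) : Prop :=
  (∀ i a b : Fin N, a < b → x (i, a) = false → x (i, b) = false →
      (∀ c : Fin N, a < c → c < b → x (i, c) = true) → Odd ((b : ℕ) - a - 1)) ∧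
  (∀ j a b : Fin N, a < b → x (a, j) = false → x (b, j) = false →
      (∀ c : Fin N, a < c → c < b → x (c, j) = true) → Odd ((b : ℕ) - a - 1))

/-- The number of configurations on the `N × N` grid satisfying the odd
constraint. -/
noncomputable def Zodd (N : ℕ) : ℕ :=
  Nat.card {x : Fin N × Fin N → Bool // OddConstraint N x}

/-! ### Parity counting lemmas -/

lemma card_filter_even (N : ℕ) :
    ((Finset.range N).filter (fun j => j % 2 = 0)).card = (N + 1) / 2 := by
  induction N with
  | zero => simp
  | succ n ih =>
    rw [Finset.range_add_one, Finset.filter_insert]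
    by_cases h : n % 2 = 0
    · rw [if_pos h, Finset.card_insert_of_notMem (by simp), ih]; omega
    · rw [if_neg h, ih]; omega

lemma card_filter_odd (N : ℕ) :
    ((Finset.range N).filter (fun j => j % 2 = 1)).card = N / 2 := by
  induction N with
  | zero => simp
  | succ n ih =>
    rw [Finset.range_add_one, Finset.filter_insert]
    by_cases h : n % 2 = 1
    · rw [if_pos h, Finset.card_insert_of_notMem (by simp), ih]; omega
    · rw [if_neg h, ih]; omega

lemma card_fin_filter (N r : ℕ) :
    ((Finset.univ : Finset (Fin N)).filter (fun j : Fin N => (j : ℕ) % 2 = r)).card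
      = ((Finset.range N).filter (fun j => j % 2 = r)).card := by
  rw [Finset.card_filter, Finset.card_filter,
    Fin.sum_univ_eq_sum_range (fun j => if j % 2 = r then 1 else 0)]

/-! ### 1D parity lemma -/

lemma parity_of_false {N : ℕ} (g : Fin N → Bool)
    (hc : ∀ a b : Fin N, a < b → g a = false → g b = false →
      (∀ c : Fin N, a < c → c < b → g c = true) → Odd ((b : ℕ) - a - 1)) :
    ∀ a b : Fin N, g a = false → g b = false → (a : ℕ) % 2 = (b : ℕ) % 2 := by
  suffices H : ∀ n : ℕ, ∀ a b : Fin N, (b : ℕ) - a ≤ n → a < b →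
      g a = false → g b = false → (a : ℕ) % 2 = (b : ℕ) % 2 by
    intro a b ha hb
    rcases lt_trichotomy a b with h | h | h
    · exact H _ a b le_rfl h ha hb
    · rw [h]
    · exact (H _ b a le_rfl h hb ha).symm
  intro n
  induction n with
  | zero =>
    intro a b hle hab _ _
    have := Fin.lt_def.mp hab; omega
  | succ n ih =>
    intro a b hle hab ha hb
    have hab' := Fin.lt_def.mp hab
    by_cases hex : ∃ c : Fin N, a < c ∧ c < b ∧ g c = false
    · obtain ⟨c, hac, hcb, hgc⟩ := hex
      have hac' := Fin.lt_def.mp hac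
      have hcb' := Fin.lt_def.mp hcb
      have h1 := ih a c (by omega) hac ha hgc
      have h2 := ih c b (by omega) hcb hgc hb
      omega
    · push_neg at hex
      have hall : ∀ c : Fin N, a < c → c < b → g c = true := by
        intro c h1 h2
        cases hgc : g c with
        | false => exact absurd hgc (hex c h1 h2)
        | true => rfl
      obtain ⟨k, hk⟩ := hc a b hab ha hb hall
      omega

/-! ### Lower bound -/

def LowDom (N : ℕ) : Type := {p : Fin N × Fin N // (p.1 : ℕ) % 2 = (p.2 : ℕ) % 2}

noncomputable instance (N : ℕ) : Fintype (LowDom N) := by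
  unfold LowDom; infer_instance

lemma card_lowDom (N : ℕ) : N ^ 2 ≤ 2 * Fintype.card (LowDom N) := by
  have hcard : Fintype.card (LowDom N) = ((N + 1) / 2) ^ 2 + (N / 2) ^ 2 := by
    rw [show Fintype.card (LowDom N)
        = Fintype.card {p : Fin N × Fin N // (p.1 : ℕ) % 2 = (p.2 : ℕ) % 2} from rfl]
    rw [Fintype.card_subtype, Finset.card_filter, Fintype.sum_prod_type]
    have hrow : ∀ i : Fin N, (∑ j : Fin N, if ((i : ℕ) % 2 = (j : ℕ) % 2) then 1 else 0)
        = if (i : ℕ) % 2 = 0 then (N + 1) / 2 else N / 2 := by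
      intro i
      have : (∑ j : Fin N, if ((i : ℕ) % 2 = (j : ℕ) % 2) then 1 else 0)
          = ((Finset.univ : Finset (Fin N)).filter
              (fun j : Fin N => (j : ℕ) % 2 = (i : ℕ) % 2)).card := by
        rw [Finset.card_filter]
        exact Finset.sum_congr rfl (fun j _ =>
          if_congr ⟨Eq.symm, Eq.symm⟩ rfl rfl)
      rw [this, card_fin_filter]
      by_cases h : (i : ℕ) % 2 = 0
      · rw [if_pos h, h, card_filter_even]
      · have h1 : (i : ℕ) % 2 = 1 := by omega
        rw [if_neg h, h1, card_filter_odd]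
    calc (∑ i : Fin N, ∑ j : Fin N, if ((i : ℕ) % 2 = (j : ℕ) % 2) then 1 else 0)
        = ∑ i : Fin N, (if (i : ℕ) % 2 = 0 then (N + 1) / 2 else N / 2) :=
          Finset.sum_congr rfl (fun i _ => hrow i)
      _ = ∑ i ∈ Finset.range N, (if i % 2 = 0 then (N + 1) / 2 else N / 2) :=
          Fin.sum_univ_eq_sum_range (fun i => if i % 2 = 0 then (N + 1) / 2 else N / 2) N
      _ = ((N + 1) / 2) ^ 2 + (N / 2) ^ 2 := by
          rw [Finset.sum_ite, Finset.sum_const, Finset.sum_const, smul_eq_mul, smul_eq_mul,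
            card_filter_even,
            Finset.filter_congr (fun x _ => by omega :
              ∀ x ∈ Finset.range N, (¬ x % 2 = 0) ↔ x % 2 = 1),
            card_filter_odd]
          ring
  rw [hcard]
  nlinarith [two_mul_le_add_sq ((N + 1) / 2) (N / 2),
    (by omega : (N + 1) / 2 + N / 2 = N)]

lemma zodd_lower (N : ℕ) : 2 ^ Fintype.card (LowDom N) ≤ Zodd N := by
  classical
  have key : ∀ (f : LowDom N → Bool),
      OddConstraint N (fun p => if h : (p.1 : ℕ) % 2 = (p.2 : ℕ) % 2 then f ⟨p, h⟩ else true) := by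
    intro f
    set x : Fin N × Fin N → Bool :=
      fun p => if h : (p.1 : ℕ) % 2 = (p.2 : ℕ) % 2 then f ⟨p, h⟩ else true with hx
    have hfalse : ∀ p : Fin N × Fin N, x p = false → (p.1 : ℕ) % 2 = (p.2 : ℕ) % 2 := by
      intro p hp
      by_contra h
      rw [hx] at hp
      simp only [dif_neg h] at hp
      exact Bool.true_eq_false_eq_False hp
    constructor
    · intro i a b hab ha hb _
      have h1 := hfalse (i, a) ha
      have h2 := hfalse (i, b) hb
      have := Fin.lt_def.mp hab
      rw [Nat.odd_iff]
      simp only at h1 h2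
      omega
    · intro j a b hab ha hb _
      have h1 := hfalse (a, j) ha
      have h2 := hfalse (b, j) hb
      have := Fin.lt_def.mp hab
      rw [Nat.odd_iff]
      simp only at h1 h2
      omega
  have : Nat.card (LowDom N → Bool) ≤ Zodd N := by
    apply Nat.card_le_card_of_injective
      (fun f => (⟨fun p => if h : (p.1 : ℕ) % 2 = (p.2 : ℕ) % 2 then f ⟨p, h⟩ else true, key f⟩ :
        {x : Fin N × Fin N → Bool // OddConstraint N x}))
    intro f₁ f₂ h
    funext q
    have := congrFun (congrArg Subtype.val h) q.1
    dsimp only at this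
    rwa [dif_pos q.2, dif_pos q.2,
      show (⟨q.1, q.2⟩ : LowDom N) = q from rfl] at this
  calc 2 ^ Fintype.card (LowDom N) = Nat.card (LowDom N → Bool) := by
        rw [Nat.card_eq_fintype_card, Fintype.card_fun, Fintype.card_bool]
    _ ≤ Zodd N := this

/-! ### Upper bound -/

def AllowedCell (N : ℕ) (rc : (Fin N → Bool) × (Fin N → Bool)) (p : Fin N × Fin N) : Prop :=
  (p.2 : ℕ) % 2 = (if rc.1 p.1 then 1 else 0) ∧ (p.1 : ℕ) % 2 = (if rc.2 p.2 then 1 else 0)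

instance (N : ℕ) (rc : (Fin N → Bool) × (Fin N → Bool)) (p : Fin N × Fin N) :
    Decidable (AllowedCell N rc p) := by unfold AllowedCell; infer_instance

def Compat (N : ℕ) (rc : (Fin N → Bool) × (Fin N → Bool)) (x : Fin N × Fin N → Bool) : Prop :=
  ∀ p, ¬ AllowedCell N rc p → x p = true

instance (N : ℕ) (rc : (Fin N → Bool) × (Fin N → Bool)) :
    DecidablePred (Compat N rc) := fun x => by unfold Compat; infer_instance

noncomputable def rcOf (N : ℕ) (x : Fin N × Fin N → Bool) :
    (Fin N → Bool) × (Fin N → Bool) :=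
  (fun i => decide (∃ j : Fin N, x (i, j) = false ∧ (j : ℕ) % 2 = 1),
   fun j => decide (∃ i : Fin N, x (i, j) = false ∧ (i : ℕ) % 2 = 1))

lemma allowed_of_false {N : ℕ} {x : Fin N × Fin N → Bool} (hx : OddConstraint N x)
    (p : Fin N × Fin N) (hp : x p = false) : AllowedCell N (rcOf N x) p := by
  classical
  obtain ⟨i, j⟩ := p
  constructor
  · -- column parity of j matches row code
    show (j : ℕ) % 2 = (if (rcOf N x).1 i then 1 else 0)
    by_cases h : (j : ℕ) % 2 = 1
    · have ht : (rcOf N x).1 i = true := decide_eq_true ⟨j, hp, h⟩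
      rw [ht, if_pos rfl]; exact h
    · have h0 : (j : ℕ) % 2 = 0 := by omega
      have hf : (rcOf N x).1 i = false := by
        apply decide_eq_false
        rintro ⟨j', hj', h1⟩
        have := parity_of_false (fun c => x (i, c)) (hx.1 i) j j' hp hj'
        omega
      rw [hf]; exact h0
  · show (i : ℕ) % 2 = (if (rcOf N x).2 j then 1 else 0)
    by_cases h : (i : ℕ) % 2 = 1
    · have ht : (rcOf N x).2 j = true := decide_eq_true ⟨i, hp, h⟩
      rw [ht, if_pos rfl]; exact h
    · have h0 : (i : ℕ) % 2 = 0 := by omega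
      have hf : (rcOf N x).2 j = false := by
        apply decide_eq_false
        rintro ⟨i', hi', h1⟩
        have := parity_of_false (fun c => x (c, j)) (hx.2 j) i i' hp hi'
        omega
      rw [hf]; exact h0

lemma compat_of_odd {N : ℕ} {x : Fin N × Fin N → Bool} (hx : OddConstraint N x) :
    Compat N (rcOf N x) x := by
  intro p hp
  cases hxp : x p with
  | true => rfl
  | false => exact absurd (allowed_of_false hx p hxp) hp

lemma card_allowed_le (N : ℕ) (rc : (Fin N → Bool) × (Fin N → Bool)) :
    Fintype.card {p : Fin N × Fin N // AllowedCell N rc p} ≤ N * ((N + 1) / 2) := by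
  classical
  rw [Fintype.card_subtype, Finset.card_filter, Fintype.sum_prod_type]
  have hrow : ∀ i : Fin N,
      (∑ j : Fin N, if AllowedCell N rc (i, j) then 1 else 0) ≤ (N + 1) / 2 := by
    intro i
    calc (∑ j : Fin N, if AllowedCell N rc (i, j) then 1 else 0)
        ≤ ∑ j : Fin N, if (j : ℕ) % 2 = (if rc.1 i then 1 else 0) then 1 else 0 := by
          apply Finset.sum_le_sum
          intro j _
          by_cases h : AllowedCell N rc (i, j)
          · rw [if_pos h, if_pos h.1]
          · rw [if_neg h]; positivity
      _ = ((Finset.univ : Finset (Fin N)).filter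
            (fun j : Fin N => (j : ℕ) % 2 = (if rc.1 i then 1 else 0))).card := by
          rw [Finset.card_filter]
      _ ≤ (N + 1) / 2 := by
          rw [card_fin_filter]
          by_cases h : rc.1 i
          · rw [if_pos h, card_filter_odd]; omega
          · rw [if_neg h, card_filter_even]
  calc (∑ i : Fin N, ∑ j : Fin N, if AllowedCell N rc (i, j) then 1 else 0)
      ≤ ∑ _i : Fin N, (N + 1) / 2 := Finset.sum_le_sum (fun i _ => hrow i)
    _ = N * ((N + 1) / 2) := by rw [Finset.sum_const, Finset.card_univ, Fintype.card_fin,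
          smul_eq_mul]

lemma card_compat_le (N : ℕ) (rc : (Fin N → Bool) × (Fin N → Bool)) :
    Fintype.card {x : Fin N × Fin N → Bool // Compat N rc x} ≤ 2 ^ (N * ((N + 1) / 2)) := by
  classical
  have hinj : Function.Injective
      (fun (x : {x : Fin N × Fin N → Bool // Compat N rc x})
        (q : {p : Fin N × Fin N // AllowedCell N rc p}) => x.1 q.1) := by
    intro x₁ x₂ h
    apply Subtype.ext
    funext p
    by_cases hp : AllowedCell N rc p
    · exact congrFun h ⟨p, hp⟩
    · rw [x₁.2 p hp, x₂.2 p hp]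
  calc Fintype.card {x : Fin N × Fin N → Bool // Compat N rc x}
      ≤ Fintype.card ({p : Fin N × Fin N // AllowedCell N rc p} → Bool) :=
        Fintype.card_le_of_injective _ hinj
    _ = 2 ^ Fintype.card {p : Fin N × Fin N // AllowedCell N rc p} := by
        rw [Fintype.card_fun, Fintype.card_bool]
    _ ≤ 2 ^ (N * ((N + 1) / 2)) :=
        Nat.pow_le_pow_right (by norm_num) (card_allowed_le N rc)

lemma zodd_upper (N : ℕ) : Zodd N ≤ 2 ^ (2 * N + N * (N + 1) / 2) := by
  classical
  have h1 : Zodd N ≤ 2 ^ (2 * N) * 2 ^ (N * ((N + 1) / 2)) := by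
    rw [Zodd, Nat.card_eq_fintype_card, Fintype.card_subtype]
    have hsub : (Finset.univ.filter (fun x => OddConstraint N x)) ⊆
        (Finset.univ : Finset ((Fin N → Bool) × (Fin N → Bool))).biUnion
          (fun rc => Finset.univ.filter (fun x : Fin N × Fin N → Bool => Compat N rc x)) := by
      intro x hxmem
      rw [Finset.mem_filter] at hxmem
      rw [Finset.mem_biUnion]
      exact ⟨rcOf N x, Finset.mem_univ _, Finset.mem_filter.mpr
        ⟨Finset.mem_univ _, compat_of_odd hxmem.2⟩⟩
    calc (Finset.univ.filter (fun x => OddConstraint N x)).card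
        ≤ ((Finset.univ : Finset ((Fin N → Bool) × (Fin N → Bool))).biUnion
            (fun rc => Finset.univ.filter
              (fun x : Fin N × Fin N → Bool => Compat N rc x))).card :=
          Finset.card_le_card hsub
      _ ≤ ∑ rc : (Fin N → Bool) × (Fin N → Bool),
            (Finset.univ.filter (fun x : Fin N × Fin N → Bool => Compat N rc x)).card :=
          Finset.card_biUnion_le
      _ ≤ ∑ _rc : (Fin N → Bool) × (Fin N → Bool), 2 ^ (N * ((N + 1) / 2)) := by
          apply Finset.sum_le_sum
          intro rc _
          rw [← Fintype.card_subtype]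
          exact card_compat_le N rc
      _ = 2 ^ (2 * N) * 2 ^ (N * ((N + 1) / 2)) := by
          rw [Finset.sum_const, Finset.card_univ, smul_eq_mul, Fintype.card_prod,
            Fintype.card_fun, Fintype.card_bool, Fintype.card_fin, ← pow_add, two_mul]
  calc Zodd N ≤ 2 ^ (2 * N) * 2 ^ (N * ((N + 1) / 2)) := h1
    _ ≤ 2 ^ (2 * N) * 2 ^ (N * (N + 1) / 2) := by
        apply Nat.mul_le_mul_left
        apply Nat.pow_le_pow_right (by norm_num)
        rw [Nat.le_div_iff_mul_le (by norm_num)]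
        calc N * ((N + 1) / 2) * 2 = N * ((N + 1) / 2 * 2) := by ring
          _ ≤ N * (N + 1) := Nat.mul_le_mul_left N (Nat.div_mul_le_self _ _)
    _ = 2 ^ (2 * N + N * (N + 1) / 2) := by rw [pow_add]

/-- The growth rate of the odd model is `√2`:
`lim_{N → ∞} Zodd(N) ^ (1 / N²) = √2`. -/
theorem odd_growth_rate :
    Tendsto (fun N : ℕ => (Zodd N : ℝ) ^ (1 / (N : ℝ) ^ 2))
      atTop (nhds (Real.sqrt 2)) := by
  have hsqrt : Real.sqrt 2 = (2 : ℝ) ^ ((1 : ℝ) / 2) := Real.sqrt_eq_rpow 2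
  set U : ℕ → ℕ := fun N => 2 * N + N * (N + 1) / 2 with hUdef
  have hUcast : ∀ N : ℕ, (U N : ℝ) = ((N : ℝ) ^ 2 + 5 * N) / 2 := by
    intro N
    obtain ⟨k, hk⟩ := Nat.even_mul_succ_self N
    have h' : N * (N + 1) = N ^ 2 + N := by ring
    have h2 : 2 * U N = N ^ 2 + 5 * N := by
      simp only [hUdef]; omega
    have h3 := congrArg (fun n : ℕ => (n : ℝ)) h2
    push_cast at h3
    linarith
  -- lower bound: eventually √2 ≤ Zodd N ^ (1/N²)
  have hlower : ∀ᶠ N : ℕ in atTop,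
      Real.sqrt 2 ≤ (Zodd N : ℝ) ^ (1 / (N : ℝ) ^ 2) := by
    filter_upwards [eventually_ge_atTop 1] with N hN
    have hN0 : (0 : ℝ) < (N : ℝ) ^ 2 := by
      have : (1 : ℝ) ≤ (N : ℝ) := by exact_mod_cast hN
      positivity
    set L := Fintype.card (LowDom N) with hL
    have hcard : ((N : ℝ)) ^ 2 ≤ 2 * (L : ℝ) := by exact_mod_cast card_lowDom N
    have hzl : ((2 : ℝ) ^ L) ≤ (Zodd N : ℝ) := by exact_mod_cast zodd_lower N
    have step1 : Real.sqrt 2 ≤ (2 : ℝ) ^ ((L : ℝ) / (N : ℝ) ^ 2) := by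
      rw [hsqrt]
      apply (Real.rpow_le_rpow_left_iff (by norm_num : (1:ℝ) < 2)).mpr
      rw [div_le_div_iff₀ (by norm_num) hN0]
      linarith
    have step2 : (2 : ℝ) ^ ((L : ℝ) / (N : ℝ) ^ 2)
        = ((2 : ℝ) ^ L) ^ ((1 : ℝ) / (N : ℝ) ^ 2) := by
      rw [← Real.rpow_natCast 2 L, ← Real.rpow_mul (by norm_num)]
      congr 1
      field_simp
    have step3 : ((2 : ℝ) ^ L) ^ ((1 : ℝ) / (N : ℝ) ^ 2)
        ≤ (Zodd N : ℝ) ^ (1 / (N : ℝ) ^ 2) :=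
      Real.rpow_le_rpow (by positivity) hzl (by positivity)
    calc Real.sqrt 2 ≤ (2 : ℝ) ^ ((L : ℝ) / (N : ℝ) ^ 2) := step1
      _ = ((2 : ℝ) ^ L) ^ ((1 : ℝ) / (N : ℝ) ^ 2) := step2
      _ ≤ (Zodd N : ℝ) ^ (1 / (N : ℝ) ^ 2) := step3
  -- upper bound: eventually Zodd N ^ (1/N²) ≤ 2 ^ (U N / N²)
  have hupper : ∀ᶠ N : ℕ in atTop,
      (Zodd N : ℝ) ^ (1 / (N : ℝ) ^ 2) ≤ (2 : ℝ) ^ ((U N : ℝ) / (N : ℝ) ^ 2) := by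
    filter_upwards [eventually_ge_atTop 1] with N hN
    have hN0 : (0 : ℝ) < (N : ℝ) ^ 2 := by
      have : (1 : ℝ) ≤ (N : ℝ) := by exact_mod_cast hN
      positivity
    have h1 : (Zodd N : ℝ) ≤ (2 : ℝ) ^ (U N) := by exact_mod_cast zodd_upper N
    have h2 : (Zodd N : ℝ) ^ (1 / (N : ℝ) ^ 2)
        ≤ ((2 : ℝ) ^ (U N)) ^ ((1 : ℝ) / (N : ℝ) ^ 2) :=
      Real.rpow_le_rpow (by positivity) h1 (by positivity)
    have h3 : ((2 : ℝ) ^ (U N)) ^ ((1 : ℝ) / (N : ℝ) ^ 2)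
        = (2 : ℝ) ^ ((U N : ℝ) / (N : ℝ) ^ 2) := by
      rw [← Real.rpow_natCast 2 (U N), ← Real.rpow_mul (by norm_num)]
      congr 1
      field_simp
    calc (Zodd N : ℝ) ^ (1 / (N : ℝ) ^ 2)
        ≤ ((2 : ℝ) ^ (U N)) ^ ((1 : ℝ) / (N : ℝ) ^ 2) := h2
      _ = (2 : ℝ) ^ ((U N : ℝ) / (N : ℝ) ^ 2) := h3
  -- the upper sequence tends to √2
  have htu : Tendsto (fun N : ℕ => (2 : ℝ) ^ ((U N : ℝ) / (N : ℝ) ^ 2))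
      atTop (nhds (Real.sqrt 2)) := by
    have he : Tendsto (fun N : ℕ => (U N : ℝ) / (N : ℝ) ^ 2) atTop (nhds (1 / 2)) := by
      have h0 : Tendsto (fun N : ℕ => 1 / 2 + (5 / 2) * (1 / (N : ℝ)))
          atTop (nhds (1 / 2)) := by
        have h1 := (tendsto_const_nhds (x := (5/2 : ℝ)) (f := atTop (α := ℕ))).mul
          tendsto_one_div_atTop_nhds_zero_nat
        have h2 := (tendsto_const_nhds (x := (1/2 : ℝ)) (f := atTop (α := ℕ))).add h1
        simpa using h2
      apply Tendsto.congr' _ h0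
      filter_upwards [eventually_ge_atTop 1] with N hN
      have hN0 : (N : ℝ) ≠ 0 := by
        have : (1 : ℝ) ≤ (N : ℝ) := by exact_mod_cast hN
        linarith
      rw [hUcast]
      field_simp
    have := Filter.Tendsto.rpow (tendsto_const_nhds (x := (2:ℝ)) (f := atTop (α := ℕ))) he
      (Or.inl (by norm_num))
    rwa [← hsqrt] at this
  exact tendsto_of_tendsto_of_tendsto_of_le_of_le' tendsto_const_nhds htu hlower hupper
end

section
/- For every N ≥ 1, the number of configurations on the 2N×2N grid satisfying the odd constraint is at least 2^(2N²). (Place ⊕ spins in a checkerboard pattern; the remaining 2N² spins may then be assigned arbitrarily and the resulting configuration always satisfies the odd constraint.) -/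
/-- For every `N ≥ 1`, the number of configurations on the `2N × 2N` grid
satisfying the odd constraint is at least `2 ^ (2N²)`. -/
theorem odd_lower_bound (N : ℕ) (hN : 1 ≤ N) :
    2 ^ (2 * N ^ 2) ≤ Zodd (2 * N) := by
  classical
  set M := 2 * N with hM
  -- the checkerboard + free spins map
  let F : (Fin M × Fin N → Bool) → {x : Fin M × Fin M → Bool // OddConstraint M x} :=
    fun f => ⟨fun p => if (p.1.val + p.2.val) % 2 = 0 then true
        else f (p.1, ⟨p.2.val / 2, by have := p.2.isLt; omega⟩), by
      constructor
      · intro i a b hab hfa hfb _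
        have ha : (i.val + a.val) % 2 ≠ 0 := by
          intro h; simp [h] at hfa
        have hb : (i.val + b.val) % 2 ≠ 0 := by
          intro h; simp [h] at hfb
        have hab' : a.val < b.val := hab
        rw [Nat.odd_iff]; omega
      · intro j a b hab hfa hfb _
        have ha : (a.val + j.val) % 2 ≠ 0 := by
          intro h; simp [h] at hfa
        have hb : (b.val + j.val) % 2 ≠ 0 := by
          intro h; simp [h] at hfb
        have hab' : a.val < b.val := hab
        rw [Nat.odd_iff]; omega⟩
  have hFinj : Function.Injective F := by
    intro f1 f2 h
    funext p
    obtain ⟨i, k⟩ := p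
    have hk := k.isLt
    have hj : 2 * k.val + (1 - i.val % 2) < M := by omega
    let j : Fin M := ⟨2 * k.val + (1 - i.val % 2), hj⟩
    have hpar : (i.val + j.val) % 2 ≠ 0 := by
      show (i.val + (2 * k.val + (1 - i.val % 2))) % 2 ≠ 0
      omega
    have := congrFun (congrArg Subtype.val h) (i, j)
    simp only [F, hpar, if_neg hpar, if_false] at this
    have hdiv : j.val / 2 = k.val := by
      show (2 * k.val + (1 - i.val % 2)) / 2 = k.val; omega
    convert this using 3 <;> exact (Fin.ext hdiv.symm)
  have hcard : Nat.card (Fin M × Fin N → Bool) = 2 ^ (2 * N ^ 2) := by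
    rw [Nat.card_eq_fintype_card, Fintype.card_fun]
    simp [hM]
    ring
  calc 2 ^ (2 * N ^ 2) = Nat.card (Fin M × Fin N → Bool) := hcard.symm
    _ ≤ Nat.card {x : Fin M × Fin M → Bool // OddConstraint M x} :=
        Nat.card_le_card_of_injective F hFinj
    _ = Zodd M := rfl
end

section
/- Let c_n be the number of words x : Fin n → Bool satisfying the one-dimensional odd constraint. Then lim_{n→∞} (c_n)^(1/n) = √2. -/
open Filter

/-- The one-dimensional odd constraint: any two `⊖` spins (`false`) with only
`⊕` spins (`true`) strictly between them are separated by an odd number of `⊕`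
spins. -/
def OddWord (n : ℕ) (x : Fin n → Bool) : Prop :=
  ∀ a b : Fin n, a < b → x a = false → x b = false →
    (∀ c : Fin n, a < c → c < b → x c = true) → Odd ((b : ℕ) - a - 1)

/-- The number of words of length `n` satisfying the one-dimensional odd
constraint. -/
noncomputable def oddWordCount (n : ℕ) : ℕ :=
  Nat.card {x : Fin n → Bool // OddWord n x}

-- lower bound injection
lemma lower_bound (n : ℕ) : 2 ^ (n / 2) ≤ oddWordCount n := by
  have key : Function.Injective (fun (y : Fin (n / 2) → Bool) =>
      (⟨fun i => if h : (i : ℕ) % 2 = 1 then y ⟨(i : ℕ) / 2, by omega⟩ else true, by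
        intro a b hab ha hb _
        simp only at ha hb
        have ha' : (a : ℕ) % 2 = 1 := by
          by_contra h; simp [h] at ha
        have hb' : (b : ℕ) % 2 = 1 := by
          by_contra h; simp [h] at hb
        rw [Nat.odd_iff]
        have : (a : ℕ) < b := hab
        omega⟩ : {x : Fin n → Bool // OddWord n x})) := by
    intro y y' h
    funext j
    have hj : 2 * (j : ℕ) + 1 < n := by omega
    have := congrFun (congrArg Subtype.val h) ⟨2 * (j : ℕ) + 1, hj⟩
    simp only at this
    have h1 : (2 * (j : ℕ) + 1) % 2 = 1 := by omega
    rw [dif_pos h1, dif_pos h1] at this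
    have h2 : (2 * (j : ℕ) + 1) / 2 = (j : ℕ) := by omega
    simpa [h2, Fin.ext_iff] using this
  calc 2 ^ (n / 2) = Nat.card (Fin (n / 2) → Bool) := by
        simp [Nat.card_eq_fintype_card]
    _ ≤ oddWordCount n := Nat.card_le_card_of_injective _ key

lemma same_parity {n : ℕ} {x : Fin n → Bool} (hx : OddWord n x) :
    ∀ k (a b : Fin n), (b : ℕ) - a = k → a ≤ b → x a = false → x b = false →
      (a : ℕ) % 2 = (b : ℕ) % 2 := by
  intro k
  induction k using Nat.strong_induction_on with
  | _ k ih =>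
    intro a b hk hab ha hb
    rcases eq_or_lt_of_le hab with h1 | h1
    · rw [h1]
    · by_cases hc : ∀ c : Fin n, a < c → c < b → x c = true
      · have hodd := hx a b h1 ha hb hc
        rw [Nat.odd_iff] at hodd
        have hlt : (a : ℕ) < b := h1
        omega
      · push_neg at hc
        obtain ⟨c, hac, hcb, hcf⟩ := hc
        have hcf : x c = false := by
          revert hcf; cases x c <;> simp
        have hac' : (a : ℕ) < c := hac
        have hcb' : (c : ℕ) < b := hcb
        have e1 := ih ((c : ℕ) - a) (by omega) a c rfl (le_of_lt hac) ha hcf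
        have e2 := ih ((b : ℕ) - c) (by omega) c b rfl (le_of_lt hcb) hcf hb
        omega

/-- All minuses of an odd word share a parity with any given minus. -/
lemma same_parity' {n : ℕ} {x : Fin n → Bool} (hx : OddWord n x)
    {a b : Fin n} (ha : x a = false) (hb : x b = false) :
    (a : ℕ) % 2 = (b : ℕ) % 2 := by
  rcases le_total a b with h | h
  · exact same_parity hx _ a b rfl h ha hb
  · exact (same_parity hx _ b a rfl h hb ha).symm

open Classical in
noncomputable def enc (n : ℕ) (x : Fin n → Bool) : Bool × (Fin ((n + 1) / 2) → Bool) :=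
  if ∃ i : Fin n, x i = false ∧ (i : ℕ) % 2 = 1 then
    (true, fun j => if h : 2 * (j : ℕ) + 1 < n then x ⟨2 * (j : ℕ) + 1, h⟩ else true)
  else
    (false, fun j => if h : 2 * (j : ℕ) < n then x ⟨2 * (j : ℕ), h⟩ else true)

lemma upper_bound (n : ℕ) : oddWordCount n ≤ 2 ^ ((n + 1) / 2 + 1) := by
  classical
  have key : Function.Injective
      (fun (x : {x : Fin n → Bool // OddWord n x}) => enc n x.val) := by
    intro x x' h
    simp only [enc] at h
    by_cases hq : ∃ i : Fin n, x.val i = false ∧ (i : ℕ) % 2 = 1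
    · by_cases hq' : ∃ i : Fin n, x'.val i = false ∧ (i : ℕ) % 2 = 1
      · rw [if_pos hq, if_pos hq'] at h
        have hy := congrArg Prod.snd h
        simp only at hy
        ext i
        by_cases hpar : (i : ℕ) % 2 = 1
        · have hj : (i : ℕ) / 2 < (n + 1) / 2 := by have := i.isLt; omega
          have hv := congrFun hy ⟨(i : ℕ) / 2, hj⟩
          have hcond : 2 * ((i : ℕ) / 2) + 1 < n := by have := i.isLt; omega
          rw [dif_pos hcond, dif_pos hcond] at hv
          have heq : (⟨2 * ((i : ℕ) / 2) + 1, hcond⟩ : Fin n) = i := Fin.ext (by simp only [Fin.val_mk]; omega)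
          rwa [heq] at hv
        · -- i even: both are true
          obtain ⟨i0, hi0f, hi0o⟩ := hq
          obtain ⟨i0', hi0f', hi0o'⟩ := hq'
          have h1 : x.val i = true := by
            by_contra hf
            have hf : x.val i = false := by revert hf; cases x.val i <;> simp
            have := same_parity' x.prop hi0f hf
            omega
          have h1' : x'.val i = true := by
            by_contra hf
            have hf : x'.val i = false := by revert hf; cases x'.val i <;> simp
            have := same_parity' x'.prop hi0f' hf
            omega
          rw [h1, h1']
      · rw [if_pos hq, if_neg hq'] at h
        exact absurd (congrArg Prod.fst h) (by simp)
    · by_cases hq' : ∃ i : Fin n, x'.val i = false ∧ (i : ℕ) % 2 = 1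
      · rw [if_neg hq, if_pos hq'] at h
        exact absurd (congrArg Prod.fst h) (by simp)
      · rw [if_neg hq, if_neg hq'] at h
        have hy := congrArg Prod.snd h
        simp only at hy
        push_neg at hq hq'
        ext i
        by_cases hpar : (i : ℕ) % 2 = 0
        · have hj : (i : ℕ) / 2 < (n + 1) / 2 := by have := i.isLt; omega
          have hv := congrFun hy ⟨(i : ℕ) / 2, hj⟩
          have hcond : 2 * ((i : ℕ) / 2) < n := by have := i.isLt; omega
          rw [dif_pos hcond, dif_pos hcond] at hv
          have heq : (⟨2 * ((i : ℕ) / 2), hcond⟩ : Fin n) = i := Fin.ext (by simp only [Fin.val_mk]; omega)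
          rwa [heq] at hv
        · have h1 : x.val i = true := by
            by_contra hf
            have hf : x.val i = false := by revert hf; cases x.val i <;> simp
            exact absurd (hq i hf) (by omega)
          have h1' : x'.val i = true := by
            by_contra hf
            have hf : x'.val i = false := by revert hf; cases x'.val i <;> simp
            exact absurd (hq' i hf) (by omega)
          rw [h1, h1']
  calc oddWordCount n ≤ Nat.card (Bool × (Fin ((n + 1) / 2) → Bool)) :=
        Nat.card_le_card_of_injective _ key
    _ = 2 ^ ((n + 1) / 2 + 1) := by
        simp [Nat.card_eq_fintype_card]; ring

lemma ratio_tendsto (a : ℕ → ℕ) (h : ∀ n, n ≤ 2 * a n + 1 ∧ 2 * a n ≤ n + 4) :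
    Tendsto (fun n : ℕ => (a n : ℝ) / n) atTop (nhds (1 / 2)) := by
  have hlow : Tendsto (fun n : ℕ => 1 / 2 - 1 / (n : ℝ)) atTop (nhds (1 / 2)) := by
    have := tendsto_const_nhds (x := (1:ℝ)/2) (f := (atTop : Filter ℕ))
    have h2 := this.sub tendsto_one_div_atTop_nhds_zero_nat
    simpa using h2
  have hup : Tendsto (fun n : ℕ => 1 / 2 + 2 / (n : ℝ)) atTop (nhds (1 / 2)) := by
    have h2 := (tendsto_const_nhds (x := (1:ℝ)/2)
      (f := (atTop : Filter ℕ))).add (tendsto_one_div_atTop_nhds_zero_nat.const_mul 2)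
    simp only [mul_zero, add_zero] at h2
    convert h2 using 2 with n
    ring
  refine tendsto_of_tendsto_of_tendsto_of_le_of_le' hlow hup ?_ ?_
  · filter_upwards [eventually_ge_atTop 1] with n hn
    have hn0 : (0:ℝ) < n := by exact_mod_cast hn
    have hc : (n : ℝ) ≤ 2 * a n + 1 := by exact_mod_cast (h n).1
    rw [le_div_iff₀ hn0, sub_mul, div_mul_cancel₀ _ hn0.ne']
    linarith
  · filter_upwards [eventually_ge_atTop 1] with n hn
    have hn0 : (0:ℝ) < n := by exact_mod_cast hn
    have hc : 2 * (a n : ℝ) ≤ n + 4 := by exact_mod_cast (h n).2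
    rw [div_le_iff₀ hn0, add_mul, div_mul_cancel₀ _ hn0.ne']
    linarith

lemma pow_ratio_tendsto (a : ℕ → ℕ) (h : ∀ n, n ≤ 2 * a n + 1 ∧ 2 * a n ≤ n + 4) :
    Tendsto (fun n : ℕ => ((2 ^ a n : ℕ) : ℝ) ^ (1 / (n : ℝ))) atTop (nhds (Real.sqrt 2)) := by
  have cont : Tendsto (fun t : ℝ => (2:ℝ) ^ t) (nhds (1/2)) (nhds ((2:ℝ) ^ ((1:ℝ)/2))) :=
    (Real.continuousAt_const_rpow (by norm_num : (2:ℝ) ≠ 0)).tendsto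
  have comp := cont.comp (ratio_tendsto a h)
  have hs : (2:ℝ) ^ ((1:ℝ)/2) = Real.sqrt 2 := by rw [← Real.sqrt_eq_rpow]
  rw [hs] at comp
  convert comp using 2 with n
  rw [Function.comp]
  push_cast
  rw [← Real.rpow_natCast 2 (a n), ← Real.rpow_mul (by norm_num)]
  congr 1
  ring

/-- `lim_{n → ∞} (c_n) ^ (1/n) = √2`, where `c_n` is the number of words of
length `n` satisfying the one-dimensional odd constraint. -/
theorem oddWord_growth_rate :
    Tendsto (fun n : ℕ => (oddWordCount n : ℝ) ^ (1 / (n : ℝ)))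
      atTop (nhds (Real.sqrt 2)) := by
  have hL := pow_ratio_tendsto (fun n => n / 2)
    (fun n => by show n ≤ 2 * (n / 2) + 1 ∧ 2 * (n / 2) ≤ n + 4; omega)
  have hU := pow_ratio_tendsto (fun n => (n + 1) / 2 + 1)
    (fun n => by show n ≤ 2 * ((n + 1) / 2 + 1) + 1 ∧ 2 * ((n + 1) / 2 + 1) ≤ n + 4; omega)
  refine tendsto_of_tendsto_of_tendsto_of_le_of_le' hL hU ?_ ?_
  · filter_upwards with n
    exact Real.rpow_le_rpow (by positivity) (by exact_mod_cast lower_bound n) (by positivity)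
  · filter_upwards with n
    exact Real.rpow_le_rpow (by positivity) (by exact_mod_cast upper_bound n) (by positivity)
end

section
/- For every N ≥ 1, Zc3(N) ≤ ZQ(N) ≤ 4^(2N) · Zc3(N). Consequently limsup_{N→∞} (Zc3(N))^(1/N²) = limsup_{N→∞} (ZQ(N))^(1/N²), i.e. the growth rates of the charge(3) and Q-charge models are equal. -/
open Filter

/-- A spin configuration: every spin is `+1` or `-1`. -/
def IsSpinConfig (N : ℕ) (x : Fin N × Fin N → ℤ) : Prop :=
  ∀ p, x p = 1 ∨ x p = -1

/-- The charge(3) constraint: every horizontal or vertical partial sum has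
absolute value at most 3. -/
def Charge3 (N : ℕ) (x : Fin N × Fin N → ℤ) : Prop :=
  (∀ i a b : Fin N, a ≤ b → |∑ j ∈ Finset.Icc a b, x (i, j)| ≤ 3) ∧
  (∀ j a b : Fin N, a ≤ b → |∑ i ∈ Finset.Icc a b, x (i, j)| ≤ 3)

/-- The number of spin configurations on the `N × N` grid satisfying the
charge(3) constraint. -/
noncomputable def Zc3 (N : ℕ) : ℕ :=
  Nat.card {x : Fin N × Fin N → ℤ // IsSpinConfig N x ∧ Charge3 N x}

/-- The `Q`-charge constraint on bond states: around every vertex, the south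
and east bond states differ from the north and west bond states (respectively)
by a common `s ∈ {+1, -1}`. -/
def QValid (N : ℕ) (h : Fin N × Fin (N + 1) → Fin 4)
    (v : Fin (N + 1) × Fin N → Fin 4) : Prop :=
  ∀ i j : Fin N, ∃ s : ℤ, (s = 1 ∨ s = -1) ∧
    ((h (i, j.succ) : ℤ) - (h (i, j.castSucc) : ℤ) = s) ∧
    ((v (i.succ, j) : ℤ) - (v (i.castSucc, j) : ℤ) = s)

/-- The number of `Q`-charge configurations on the `N × N` grid. -/
noncomputable def ZQ (N : ℕ) : ℕ :=
  Nat.card {p : (Fin N × Fin (N + 1) → Fin 4) × (Fin (N + 1) × Fin N → Fin 4) //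
    QValid N p.1 p.2}

namespace C3Q

variable {N : ℕ}

def psum (y : Fin N → ℤ) (t : ℕ) : ℤ :=
  ∑ k ∈ Finset.univ.filter (fun k : Fin N => (k:ℕ) < t), y k

lemma psum_zero (y : Fin N → ℤ) : psum y 0 = 0 := by simp [psum]

lemma psum_succ (y : Fin N → ℤ) (j : Fin N) :
    psum y ((j:ℕ)+1) = psum y (j:ℕ) + y j := by
  unfold psum
  have : Finset.univ.filter (fun k : Fin N => (k:ℕ) < (j:ℕ)+1)
      = insert j (Finset.univ.filter (fun k : Fin N => (k:ℕ) < (j:ℕ))) := by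
    ext k
    simp only [Finset.mem_filter, Finset.mem_univ, true_and, Finset.mem_insert, Fin.ext_iff]
    omega
  rw [this, Finset.sum_insert (by simp)]
  ring

lemma psum_Icc (y : Fin N → ℤ) (a b : Fin N) (hab : a ≤ b) :
    ∑ j ∈ Finset.Icc a b, y j = psum y ((b:ℕ)+1) - psum y (a:ℕ) := by
  have h1 : Finset.Icc a b
      = Finset.univ.filter (fun k : Fin N => (k:ℕ) < (b:ℕ)+1 ∧ ¬ (k:ℕ) < (a:ℕ)) := by
    ext k
    simp only [Finset.mem_Icc, Finset.mem_filter, Finset.mem_univ, true_and, Fin.le_def, not_lt]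
    omega
  have h2 : (Finset.univ.filter (fun k : Fin N => (k:ℕ) < (b:ℕ)+1)).filter
      (fun k : Fin N => (k:ℕ) < (a:ℕ)) = Finset.univ.filter (fun k : Fin N => (k:ℕ) < (a:ℕ)) := by
    ext k
    simp only [Finset.mem_filter, Finset.mem_univ, true_and, and_iff_right_iff_imp]
    have : (a:ℕ) ≤ (b:ℕ) := hab
    omega
  have h3 := Finset.sum_filter_add_sum_filter_not
    (Finset.univ.filter (fun k : Fin N => (k:ℕ) < (b:ℕ)+1))
    (fun k : Fin N => (k:ℕ) < (a:ℕ)) y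
  rw [h2] at h3
  rw [h1, ← Finset.filter_filter]
  unfold psum
  linarith [h3]

/-- if the Icc-sums of `y` are small, so are differences of partial sums. -/
lemma psum_diff_bound {y : Fin N → ℤ}
    (hy : ∀ a b : Fin N, a ≤ b → |∑ j ∈ Finset.Icc a b, y j| ≤ 3) :
    ∀ s t : ℕ, s ≤ t → t ≤ N → |psum y t - psum y s| ≤ 3 := by
  intro s t hst htN
  rcases eq_or_lt_of_le hst with rfl | hlt
  · simp
  · have hsN : s < N := lt_of_lt_of_le hlt htN
    have htm : t - 1 < N := by omega
    have hab : (⟨s, hsN⟩ : Fin N) ≤ ⟨t-1, htm⟩ := by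
      simp [Fin.le_def]; omega
    have := hy ⟨s, hsN⟩ ⟨t-1, htm⟩ hab
    rw [psum_Icc _ _ _ hab] at this
    simpa [show (t-1)+1 = t by omega] using this

/-- Partial sums of a telescoping sequence. -/
lemma psum_eq_tele (y : Fin N → ℤ) (H : Fin (N+1) → ℤ)
    (hy : ∀ j : Fin N, y j = H j.succ - H j.castSucc) :
    ∀ t : ℕ, (ht : t ≤ N) → psum y t = H ⟨t, by omega⟩ - H ⟨0, by omega⟩ := by
  intro t
  induction t with
  | zero => intro _; simp [psum_zero]
  | succ t ih =>
    intro ht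
    have htN : t < N := ht
    have h1 : psum y (t+1) = psum y t + y ⟨t, htN⟩ := by
      have := psum_succ y ⟨t, htN⟩
      simpa using this
    rw [h1, ih (le_of_lt htN), hy ⟨t, htN⟩]
    have e1 : (⟨t, htN⟩ : Fin N).succ = (⟨t+1, by omega⟩ : Fin (N+1)) := by
      simp [Fin.ext_iff]
    have e2 : (⟨t, htN⟩ : Fin N).castSucc = (⟨t, by omega⟩ : Fin (N+1)) := by
      simp [Fin.ext_iff]
    rw [e1, e2]
    ring

lemma sum_Icc_tele (y : Fin N → ℤ) (H : Fin (N+1) → ℤ)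
    (hy : ∀ j : Fin N, y j = H j.succ - H j.castSucc) (a b : Fin N) (hab : a ≤ b) :
    ∑ j ∈ Finset.Icc a b, y j = H b.succ - H a.castSucc := by
  rw [psum_Icc y a b hab,
    psum_eq_tele y H hy ((b:ℕ)+1) (by omega), psum_eq_tele y H hy (a:ℕ) (by omega)]
  have e1 : (⟨(b:ℕ)+1, by omega⟩ : Fin (N+1)) = b.succ := by simp [Fin.ext_iff]
  have e2 : (⟨(a:ℕ), by omega⟩ : Fin (N+1)) = a.castSucc := by simp [Fin.ext_iff]
  rw [e1, e2]
  ring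

end C3Q

noncomputable def spinEmb (N : ℕ) (x : {x : Fin N × Fin N → ℤ // IsSpinConfig N x ∧ Charge3 N x}) :
    Fin N × Fin N → Bool := fun p => decide (x.1 p = 1)

lemma spinEmb_inj (N : ℕ) : Function.Injective (spinEmb N) := by
  intro x y hxy
  apply Subtype.ext; funext p
  have key : ∀ z : ℤ, (z = 1 ∨ z = -1) → z = if decide (z = 1) then 1 else -1 := by
    rintro z (rfl | rfl) <;> simp
  rw [key _ (x.2.1 p), key _ (y.2.1 p)]
  rw [show decide (x.1 p = 1) = decide (y.1 p = 1) from congrFun hxy p]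

instance spinFinite (N : ℕ) : Finite {x : Fin N × Fin N → ℤ // IsSpinConfig N x ∧ Charge3 N x} :=
  Finite.of_injective _ (spinEmb_inj N)

open C3Q in
lemma ZQ_le (N : ℕ) : ZQ N ≤ 4 ^ (2 * N) * Zc3 N := by
  classical
  -- the spin configuration extracted from a Q-configuration
  set T := {p : (Fin N × Fin (N + 1) → Fin 4) × (Fin (N + 1) × Fin N → Fin 4) //
    QValid N p.1 p.2} with hT
  let xof : T → (Fin N × Fin N → ℤ) := fun p q =>
    ((p.1.1 (q.1, q.2.succ) : ℤ) - (p.1.1 (q.1, q.2.castSucc) : ℤ))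
  have hvdiff : ∀ (p : T) (i j : Fin N),
      xof p (i, j) = (p.1.2 (i.succ, j) : ℤ) - (p.1.2 (i.castSucc, j) : ℤ) := by
    intro p i j
    obtain ⟨s, _, hh, hv⟩ := p.2 i j
    show (p.1.1 (i, j.succ) : ℤ) - (p.1.1 (i, j.castSucc) : ℤ) = _
    rw [hh, hv]
  have hspin : ∀ p : T, IsSpinConfig N (xof p) := by
    rintro p ⟨i, j⟩
    obtain ⟨s, hs, hh, _⟩ := p.2 i j
    have hxs : xof p (i, j) = s := hh
    rw [hxs]; exact hs
  have hbd : ∀ m : Fin 4, (0:ℤ) ≤ (m:ℤ) ∧ (m:ℤ) ≤ 3 := by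
    intro m
    have := m.is_lt
    constructor <;> [positivity; exact_mod_cast Nat.lt_succ_iff.mp this]
  have hch : ∀ p : T, Charge3 N (xof p) := by
    intro p
    constructor
    · intro i a b hab
      have := sum_Icc_tele (fun j => xof p (i, j)) (fun j => (p.1.1 (i, j) : ℤ))
        (fun j => rfl) a b hab
      rw [this]
      show |(p.1.1 (i, b.succ) : ℤ) - (p.1.1 (i, a.castSucc) : ℤ)| ≤ 3
      have h1 := hbd (p.1.1 (i, b.succ)); have h2 := hbd (p.1.1 (i, a.castSucc))
      rw [abs_le]; omega
    · intro j a b hab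
      have := sum_Icc_tele (fun i => xof p (i, j)) (fun i => (p.1.2 (i, j) : ℤ))
        (fun i => hvdiff p i j) a b hab
      rw [this]
      show |(p.1.2 (b.succ, j) : ℤ) - (p.1.2 (a.castSucc, j) : ℤ)| ≤ 3
      have h1 := hbd (p.1.2 (b.succ, j)); have h2 := hbd (p.1.2 (a.castSucc, j))
      rw [abs_le]; omega
  let G : T → {x : Fin N × Fin N → ℤ // IsSpinConfig N x ∧ Charge3 N x}
      × (Fin N → Fin 4) × (Fin N → Fin 4) :=
    fun p => (⟨xof p, hspin p, hch p⟩, fun i => p.1.1 (i, 0), fun j => p.1.2 (0, j))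
  have hGinj : Function.Injective G := by
    intro p p' hpp
    have hx : xof p = xof p' := congrArg (fun t => (Subtype.val t.1)) hpp
    have hh0 : ∀ i : Fin N, p.1.1 (i, 0) = p'.1.1 (i, 0) := by
      intro i; exact congrFun (congrArg (fun t => t.2.1) hpp) i
    have hv0 : ∀ j : Fin N, p.1.2 (0, j) = p'.1.2 (0, j) := by
      intro j; exact congrFun (congrArg (fun t => t.2.2) hpp) j
    -- reconstruct h from x and boundary
    have hrec : ∀ (q : T) (i : Fin N) (j : Fin (N+1)),
        (q.1.1 (i, j) : ℤ) = (q.1.1 (i, 0) : ℤ) + psum (fun k => xof q (i, k)) (j : ℕ) := by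
      intro q i j
      have := psum_eq_tele (fun k => xof q (i, k)) (fun j => (q.1.1 (i, j) : ℤ))
        (fun k => rfl) (j : ℕ) (by omega)
      rw [this]
      have e1 : (⟨(j:ℕ), by omega⟩ : Fin (N+1)) = j := by simp [Fin.ext_iff]
      have e2 : (⟨0, by omega⟩ : Fin (N+1)) = (0 : Fin (N+1)) := rfl
      rw [e1, e2]; ring
    have hvrec : ∀ (q : T) (j : Fin N) (i : Fin (N+1)),
        (q.1.2 (i, j) : ℤ) = (q.1.2 (0, j) : ℤ) + psum (fun k => xof q (k, j)) (i : ℕ) := by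
      intro q j i
      have := psum_eq_tele (fun k => xof q (k, j)) (fun i => (q.1.2 (i, j) : ℤ))
        (fun k => hvdiff q k j) (i : ℕ) (by omega)
      rw [this]
      have e1 : (⟨(i:ℕ), by omega⟩ : Fin (N+1)) = i := by simp [Fin.ext_iff]
      have e2 : (⟨0, by omega⟩ : Fin (N+1)) = (0 : Fin (N+1)) := rfl
      rw [e1, e2]; ring
    apply Subtype.ext
    apply Prod.ext
    · funext q
      obtain ⟨i, j⟩ := q
      have : (p.1.1 (i, j) : ℤ) = (p'.1.1 (i, j) : ℤ) := by
        rw [hrec p i j, hrec p' i j, hh0 i, hx]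
      exact_mod_cast Fin.ext (by exact_mod_cast this)
    · funext q
      obtain ⟨i, j⟩ := q
      have : (p.1.2 (i, j) : ℤ) = (p'.1.2 (i, j) : ℤ) := by
        rw [hvrec p j i, hvrec p' j i, hv0 j, hx]
      exact_mod_cast Fin.ext (by exact_mod_cast this)
  calc ZQ N ≤ Nat.card ({x : Fin N × Fin N → ℤ // IsSpinConfig N x ∧ Charge3 N x}
      × (Fin N → Fin 4) × (Fin N → Fin 4)) := Nat.card_le_card_of_injective G hGinj
    _ = Zc3 N * (4 ^ N * 4 ^ N) := by
        rw [Nat.card_prod, Nat.card_prod, Nat.card_fun]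
        simp [Zc3, Nat.card_eq_fintype_card]
    _ = 4 ^ (2 * N) * Zc3 N := by ring

open C3Q in
lemma Zc3_le (N : ℕ) : Zc3 N ≤ ZQ N := by
  classical
  set S := {x : Fin N × Fin N → ℤ // IsSpinConfig N x ∧ Charge3 N x} with hS
  -- minimum of partial sums of a sequence
  let mn : (Fin N → ℤ) → ℤ := fun y =>
    (Finset.image (fun t : Fin (N+1) => psum y (t : ℕ)) Finset.univ).min'
      (Finset.Nonempty.image Finset.univ_nonempty _)
  have hmn_le : ∀ (y : Fin N → ℤ) (t : ℕ), t ≤ N → mn y ≤ psum y t := by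
    intro y t ht
    have : psum y ((⟨t, by omega⟩ : Fin (N+1)) : ℕ) ∈
        Finset.image (fun t : Fin (N+1) => psum y (t : ℕ)) Finset.univ :=
      Finset.mem_image_of_mem _ (Finset.mem_univ _)
    exact Finset.min'_le _ _ this
  have hmn_mem : ∀ y : Fin N → ℤ, ∃ t : ℕ, t ≤ N ∧ psum y t = mn y := by
    intro y
    obtain ⟨t, _, ht⟩ := Finset.mem_image.mp (Finset.min'_mem
      (Finset.image (fun t : Fin (N+1) => psum y (t : ℕ)) Finset.univ)
      (Finset.Nonempty.image Finset.univ_nonempty _))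
    exact ⟨(t : ℕ), by omega, ht⟩
  -- bounds for the normalized heights
  have hkey : ∀ (y : Fin N → ℤ),
      (∀ a b : Fin N, a ≤ b → |∑ j ∈ Finset.Icc a b, y j| ≤ 3) →
      ∀ t : ℕ, t ≤ N → 0 ≤ psum y t - mn y ∧ psum y t - mn y ≤ 3 := by
    intro y hy t ht
    refine ⟨by linarith [hmn_le y t ht], ?_⟩
    obtain ⟨t0, ht0, he⟩ := hmn_mem y
    rw [← he]
    rcases le_total t0 t with h | h
    · have := psum_diff_bound hy t0 t h ht
      rw [abs_le] at this; omega
    · have := psum_diff_bound hy t t0 h ht0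
      rw [abs_le] at this; omega
  -- construct Q-configuration from a spin configuration
  let row : S → Fin N → Fin N → ℤ := fun x i k => x.1 (i, k)
  let col : S → Fin N → Fin N → ℤ := fun x j k => x.1 (k, j)
  have hrowb : ∀ (x : S) (i : Fin N) (t : ℕ), t ≤ N →
      0 ≤ psum (row x i) t - mn (row x i) ∧ psum (row x i) t - mn (row x i) ≤ 3 :=
    fun x i => hkey _ (fun a b hab => x.2.2.1 i a b hab)
  have hcolb : ∀ (x : S) (j : Fin N) (t : ℕ), t ≤ N →
      0 ≤ psum (col x j) t - mn (col x j) ∧ psum (col x j) t - mn (col x j) ≤ 3 :=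
    fun x j => hkey _ (fun a b hab => x.2.2.2 j a b hab)
  let hf : S → Fin N × Fin (N+1) → Fin 4 := fun x q =>
    ⟨(psum (row x q.1) (q.2 : ℕ) - mn (row x q.1)).toNat, by
      have := hrowb x q.1 (q.2 : ℕ) (by omega); omega⟩
  let vf : S → Fin (N+1) × Fin N → Fin 4 := fun x q =>
    ⟨(psum (col x q.2) (q.1 : ℕ) - mn (col x q.2)).toNat, by
      have := hcolb x q.2 (q.1 : ℕ) (by omega); omega⟩
  have hfc : ∀ (x : S) (q : Fin N × Fin (N+1)),
      ((hf x q : Fin 4) : ℤ) = psum (row x q.1) (q.2 : ℕ) - mn (row x q.1) := by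
    intro x q
    have := hrowb x q.1 (q.2 : ℕ) (by omega)
    show ((Int.toNat _ : ℕ) : ℤ) = _
    omega
  have hvc : ∀ (x : S) (q : Fin (N+1) × Fin N),
      ((vf x q : Fin 4) : ℤ) = psum (col x q.2) (q.1 : ℕ) - mn (col x q.2) := by
    intro x q
    have := hcolb x q.2 (q.1 : ℕ) (by omega)
    show ((Int.toNat _ : ℕ) : ℤ) = _
    omega
  have hQ : ∀ x : S, QValid N (hf x) (vf x) := by
    intro x i j
    refine ⟨x.1 (i, j), x.2.1 (i, j), ?_, ?_⟩
    · rw [hfc, hfc]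
      show psum (row x i) ((j.succ : Fin (N+1)) : ℕ) - _ -
        (psum (row x i) ((j.castSucc : Fin (N+1)) : ℕ) - _) = _
      rw [Fin.val_succ, Fin.coe_castSucc, psum_succ (row x i) j]
      show psum (row x i) (j : ℕ) + x.1 (i, j) - _ - _ = _
      ring
    · rw [hvc, hvc]
      show psum (col x j) ((i.succ : Fin (N+1)) : ℕ) - _ -
        (psum (col x j) ((i.castSucc : Fin (N+1)) : ℕ) - _) = _
      rw [Fin.val_succ, Fin.coe_castSucc, psum_succ (col x j) i]
      show psum (col x j) (i : ℕ) + x.1 (i, j) - _ - _ = _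
      ring
  let F : S → {p : (Fin N × Fin (N + 1) → Fin 4) × (Fin (N + 1) × Fin N → Fin 4) //
      QValid N p.1 p.2} := fun x => ⟨(hf x, vf x), hQ x⟩
  have hFinj : Function.Injective F := by
    intro x x' hxx
    have hh : hf x = hf x' := congrArg (fun t => t.1.1) hxx
    apply Subtype.ext
    funext q
    obtain ⟨i, j⟩ := q
    have h1 : ((hf x (i, j.succ) : Fin 4) : ℤ) - ((hf x (i, j.castSucc) : Fin 4) : ℤ)
        = x.1 (i, j) := by
      rw [hfc, hfc, Fin.val_succ, Fin.coe_castSucc, psum_succ (row x i) j]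
      show psum (row x i) (j : ℕ) + x.1 (i, j) - _ - _ = _
      ring
    have h2 : ((hf x' (i, j.succ) : Fin 4) : ℤ) - ((hf x' (i, j.castSucc) : Fin 4) : ℤ)
        = x'.1 (i, j) := by
      rw [hfc, hfc, Fin.val_succ, Fin.coe_castSucc, psum_succ (row x' i) j]
      show psum (row x' i) (j : ℕ) + x'.1 (i, j) - _ - _ = _
      ring
    rw [← h1, ← h2, hh]
  exact Nat.card_le_card_of_injective F hFinj

lemma Zc3_le_pow (N : ℕ) : Zc3 N ≤ 2 ^ (N * N) := by
  calc Zc3 N ≤ Nat.card (Fin N × Fin N → Bool) :=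
        Nat.card_le_card_of_injective _ (spinEmb_inj N)
    _ = 2 ^ (N * N) := by
        rw [Nat.card_fun]
        simp [Nat.card_eq_fintype_card]


/-- For every `N ≥ 1`, `Zc3(N) ≤ ZQ(N) ≤ 4^(2N) · Zc3(N)`; consequently the
growth rates (as `limsup`s) of the charge(3) and `Q`-charge models are equal. -/
theorem charge3_Qcharge_growth_rates_equal :
    (∀ N : ℕ, 1 ≤ N → Zc3 N ≤ ZQ N ∧ ZQ N ≤ 4 ^ (2 * N) * Zc3 N) ∧
    limsup (fun N : ℕ => (Zc3 N : ℝ) ^ (1 / (N : ℝ) ^ 2)) atTop =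
      limsup (fun N : ℕ => (ZQ N : ℝ) ^ (1 / (N : ℝ) ^ 2)) atTop := by
  refine ⟨fun N _ => ⟨Zc3_le N, ZQ_le N⟩, ?_⟩
  set u : ℕ → ℝ := fun N => (Zc3 N : ℝ) ^ (1 / (N : ℝ) ^ 2) with hu
  set w : ℕ → ℝ := fun N => (ZQ N : ℝ) ^ (1 / (N : ℝ) ^ 2) with hw
  have he0 : ∀ N : ℕ, (0:ℝ) ≤ 1 / (N : ℝ) ^ 2 := fun N => by positivity
  have hu0 : ∀ N, 0 ≤ u N := fun N => Real.rpow_nonneg (Nat.cast_nonneg _) _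
  have hw0 : ∀ N, 0 ≤ w N := fun N => Real.rpow_nonneg (Nat.cast_nonneg _) _
  -- exponent identity for N ≥ 1
  have hexp : ∀ N : ℕ, 1 ≤ N → ∀ m : ℕ, ((2:ℝ) ^ (m * (N * N) : ℕ)) ^ (1 / (N : ℝ) ^ 2)
      = 2 ^ (m : ℝ) := by
    intro N hN m
    have hN0 : (N:ℝ) ≠ 0 := Nat.cast_ne_zero.mpr (by omega)
    rw [← Real.rpow_natCast (2:ℝ) (m * (N * N)), ← Real.rpow_mul (by norm_num)]
    congr 1
    push_cast
    rw [mul_one_div, div_eq_iff (by positivity)]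
    ring
  -- bounds
  have hubd : ∀ N, u N ≤ 32 := by
    intro N
    rcases Nat.eq_zero_or_pos N with rfl | hN
    · simp only [hu]
      norm_num [Real.rpow_zero]
    · have h1 : (Zc3 N : ℝ) ≤ (2:ℝ) ^ (1 * (N * N) : ℕ) := by
        rw [one_mul]; exact_mod_cast Zc3_le_pow N
      have := Real.rpow_le_rpow (Nat.cast_nonneg _) h1 (he0 N)
      rw [hexp N hN 1] at this
      calc u N ≤ (2:ℝ) ^ ((1:ℕ):ℝ) := this
        _ ≤ 32 := by rw [Real.rpow_natCast]; norm_num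
  have hZQbd : ∀ N : ℕ, 1 ≤ N → ZQ N ≤ 2 ^ (5 * (N * N)) := by
    intro N hN
    calc ZQ N ≤ 4 ^ (2 * N) * Zc3 N := ZQ_le N
      _ ≤ 4 ^ (2 * N) * 2 ^ (N * N) := Nat.mul_le_mul_left _ (Zc3_le_pow N)
      _ = 2 ^ (4 * N + N * N) := by
          rw [pow_add, show (4:ℕ) = 2^2 from rfl, ← pow_mul]
          ring_nf
      _ ≤ 2 ^ (5 * (N * N)) := Nat.pow_le_pow_right (by norm_num) (by nlinarith)
  have hwbd : ∀ N, w N ≤ 32 := by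
    intro N
    rcases Nat.eq_zero_or_pos N with rfl | hN
    · simp only [hw]
      norm_num [Real.rpow_zero]
    · have h1 : (ZQ N : ℝ) ≤ (2:ℝ) ^ (5 * (N * N) : ℕ) := by exact_mod_cast hZQbd N hN
      have := Real.rpow_le_rpow (Nat.cast_nonneg _) h1 (he0 N)
      rw [hexp N hN 5] at this
      calc w N ≤ (2:ℝ) ^ ((5:ℕ):ℝ) := this
        _ = 32 := by rw [Real.rpow_natCast]; norm_num
  -- u ≤ w eventually
  have huw : ∀ᶠ N in atTop, u N ≤ w N := by
    filter_upwards [eventually_ge_atTop 1] with N hN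
    exact Real.rpow_le_rpow (Nat.cast_nonneg _) (Nat.cast_le.mpr (Zc3_le N)) (he0 N)
  -- w ≤ c * u eventually, where c N = 4 ^ (2 / N)
  set c : ℕ → ℝ := fun N => (4:ℝ) ^ ((2:ℝ) / (N:ℝ)) with hc
  have hcw : ∀ᶠ N in atTop, w N ≤ c N * u N := by
    filter_upwards [eventually_ge_atTop 1] with N hN
    have hN0 : (N:ℝ) ≠ 0 := Nat.cast_ne_zero.mpr (by omega)
    have h1 : (ZQ N : ℝ) ≤ ((4:ℝ) ^ (2 * N : ℕ)) * (Zc3 N : ℝ) := by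
      exact_mod_cast ZQ_le N
    have h2 := Real.rpow_le_rpow (Nat.cast_nonneg _) h1 (he0 N)
    have h3 : (((4:ℝ) ^ (2 * N : ℕ)) * (Zc3 N : ℝ)) ^ (1 / (N : ℝ) ^ 2)
        = c N * u N := by
      rw [Real.mul_rpow (by positivity) (Nat.cast_nonneg _)]
      congr 1
      rw [← Real.rpow_natCast (4:ℝ) (2 * N), ← Real.rpow_mul (by norm_num)]
      congr 1
      push_cast
      field_simp
    rw [h3] at h2
    exact h2
  -- c tends to 1
  have hctend : Tendsto c atTop (nhds 1) := by
    have h2n : Tendsto (fun N : ℕ => (2:ℝ) / (N:ℝ)) atTop (nhds 0) :=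
      tendsto_const_div_atTop_nhds_zero_nat 2
    have := (tendsto_const_nhds (x := (4:ℝ)) (f := atTop (α := ℕ))).rpow h2n
      (Or.inl (by norm_num))
    simpa using this
  -- boundedness facts
  have hbu : IsBoundedUnder (· ≤ ·) atTop u := isBoundedUnder_of ⟨32, hubd⟩
  have hbw : IsBoundedUnder (· ≤ ·) atTop w := isBoundedUnder_of ⟨32, hwbd⟩
  have hcbd : ∀ N, c N ≤ 16 := by
    intro N
    calc c N ≤ (4:ℝ) ^ (2:ℝ) := by
          apply Real.rpow_le_rpow_of_exponent_le (by norm_num)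
          rcases Nat.eq_zero_or_pos N with rfl | hN
          · norm_num
          · rw [div_le_iff₀ (by positivity)]
            nlinarith [(by exact_mod_cast hN : (1:ℝ) ≤ (N:ℝ))]
      _ = 16 := by
          rw [show (2:ℝ) = ((2:ℕ):ℝ) from by norm_num, Real.rpow_natCast]; norm_num
  have hc0 : ∀ N, 0 ≤ c N := fun N => Real.rpow_nonneg (by norm_num) _
  have hbcu : IsBoundedUnder (· ≤ ·) atTop (c * u) :=
    isBoundedUnder_of ⟨16 * 32, fun N => mul_le_mul (hcbd N) (hubd N) (hu0 N) (by norm_num)⟩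
  have hcou : IsCoboundedUnder (· ≤ ·) atTop u := isCoboundedUnder_le_of_le atTop hu0
  have hcow : IsCoboundedUnder (· ≤ ·) atTop w := isCoboundedUnder_le_of_le atTop hw0
  -- conclude
  apply le_antisymm
  · exact limsup_le_limsup huw hcou hbw
  · have hbc : IsBoundedUnder (· ≤ ·) atTop c := isBoundedUnder_of ⟨16, hcbd⟩
    calc limsup w atTop ≤ limsup (c * u) atTop := limsup_le_limsup hcw hcow hbcu
      _ ≤ limsup c atTop * limsup u atTop :=
          limsup_mul_le (Frequently.of_forall hc0) hbc (Eventually.of_forall hu0) hbu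
      _ = limsup u atTop := by rw [hctend.limsup_eq, one_mul]
end

section
/- For every N ≥ 1, Zeven(N) ≤ Zpi(N) ≤ 2^(2N) · Zeven(N). Consequently limsup_{N→∞} (Zeven(N))^(1/N²) = limsup_{N→∞} (Zpi(N))^(1/N²), i.e. the growth rate of the even model equals that of the p-i model. -/
open Filter

/-- The even constraint: any two `⊖` spins (`false`) in the same row or column
with only `⊕` spins (`true`) strictly between them are separated by an even
number of `⊕` spins. -/
def EvenConstraint (N : ℕ) (x : Fin N × Fin N → Bool) : Prop :=
  (∀ i a b : Fin N, a < b → x (i, a) = false → x (i, b) = false →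
      (∀ c : Fin N, a < c → c < b → x (i, c) = true) → Even ((b : ℕ) - a - 1)) ∧
  (∀ j a b : Fin N, a < b → x (a, j) = false → x (b, j) = false →
      (∀ c : Fin N, a < c → c < b → x (c, j) = true) → Even ((b : ℕ) - a - 1))

/-- The number of configurations on the `N × N` grid satisfying the even
constraint. -/
noncomputable def Zeven (N : ℕ) : ℕ :=
  Nat.card {x : Fin N × Fin N → Bool // EvenConstraint N x}

/-- The `p`-`i` constraint on bond states (`true` = state `i`, `false` = state
`p`): around every vertex, either all four incident bond states are `p`, or
exactly two of them are `i`, one horizontal and one vertical. -/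
def PiValid (N : ℕ) (h : Fin N × Fin (N + 1) → Bool)
    (v : Fin (N + 1) × Fin N → Bool) : Prop :=
  ∀ i j : Fin N,
    (h (i, j.castSucc) = false ∧ h (i, j.succ) = false ∧
      v (i.castSucc, j) = false ∧ v (i.succ, j) = false) ∨
    (h (i, j.castSucc) ≠ h (i, j.succ) ∧ v (i.castSucc, j) ≠ v (i.succ, j))

/-- The number of `p`-`i` configurations on the `N × N` grid. -/
noncomputable def Zpi (N : ℕ) : ℕ :=
  Nat.card {p : (Fin N × Fin (N + 1) → Bool) × (Fin (N + 1) × Fin N → Bool) //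
    PiValid N p.1 p.2}

/-- number of `true`s among positions `< j` -/
def cnt {N : ℕ} (w : Fin N → Bool) (j : ℕ) : ℕ :=
  (Finset.univ.filter fun c : Fin N => (c : ℕ) < j ∧ w c = true).card

lemma cnt_add {N : ℕ} (w : Fin N → Bool) {a b : ℕ} (hab : a ≤ b) :
    cnt w b = cnt w a +
      (Finset.univ.filter fun c : Fin N => a ≤ (c : ℕ) ∧ (c : ℕ) < b ∧ w c = true).card := by
  classical
  unfold cnt
  rw [← Finset.card_union_of_disjoint]
  · congr 1
    ext c
    simp only [Finset.mem_filter, Finset.mem_union, Finset.mem_univ, true_and]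
    by_cases hc : w c = true <;> simp [hc] <;> omega
  · rw [Finset.disjoint_filter]
    intro c _ hc hc'
    omega

lemma cnt_succ {N : ℕ} (w : Fin N → Bool) (c : Fin N) :
    cnt w ((c : ℕ) + 1) = cnt w c + (if w c = true then 1 else 0) := by
  classical
  rw [cnt_add w (Nat.le_succ c)]
  congr 1
  by_cases hc : w c = true
  · rw [if_pos hc]
    rw [show (Finset.univ.filter fun d : Fin N => (c:ℕ) ≤ (d : ℕ) ∧ (d : ℕ) < (c:ℕ)+1 ∧ w d = true) = {c} from ?_]
    · simp
    · ext d
      simp only [Finset.mem_filter, Finset.mem_univ, true_and, Finset.mem_singleton]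
      constructor
      · rintro ⟨h1, h2, _⟩; exact Fin.ext (by omega)
      · rintro rfl; exact ⟨le_refl _, by omega, hc⟩
  · rw [if_neg hc]
    rw [show (Finset.univ.filter fun d : Fin N => (c:ℕ) ≤ (d : ℕ) ∧ (d : ℕ) < (c:ℕ)+1 ∧ w d = true) = ∅ from ?_]
    · simp
    · ext d
      simp only [Finset.mem_filter, Finset.mem_univ, true_and, Finset.notMem_empty, iff_false]
      rintro ⟨h1, h2, h3⟩
      exact hc (by rwa [show c = d from Fin.ext (by omega)])

/-- 1-D even constraint -/
def EC1 {N : ℕ} (w : Fin N → Bool) : Prop :=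
  ∀ a b : Fin N, a < b → w a = false → w b = false →
    (∀ c : Fin N, a < c → c < b → w c = true) → Even ((b : ℕ) - a - 1)

lemma gap_card {N : ℕ} (w : Fin N → Bool) {a b : Fin N} (hab : a < b)
    (hfa : w a = false)
    (hall : ∀ c : Fin N, a < c → c < b → w c = true) :
    (Finset.univ.filter fun c : Fin N => (a:ℕ) ≤ (c : ℕ) ∧ (c : ℕ) < (b:ℕ) ∧ w c = true).card
      = (b : ℕ) - a - 1 := by
  classical
  rw [show (Finset.univ.filter fun c : Fin N => (a:ℕ) ≤ (c : ℕ) ∧ (c : ℕ) < (b:ℕ) ∧ w c = true)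
      = Finset.Ioo a b from ?_]
  · exact Fin.card_Ioo a b
  · ext c
    simp only [Finset.mem_filter, Finset.mem_univ, true_and, Finset.mem_Ioo]
    constructor
    · rintro ⟨h1, h2, h3⟩
      have : a < c := by
        rcases lt_or_eq_of_le (Fin.le_def.mpr h1) with h | h
        · exact h
        · exact absurd (h ▸ hfa) (by rw [h3]; simp)
      exact ⟨this, Fin.lt_def.mpr h2⟩
    · rintro ⟨h1, h2⟩
      exact ⟨Fin.le_def.mp h1.le, Fin.lt_def.mp h2, hall c h1 h2⟩

lemma parity_eq {N : ℕ} {w : Fin N → Bool} (hw : EC1 w) :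
    ∀ a b : Fin N, w a = false → w b = false → cnt w a % 2 = cnt w b % 2 := by
  suffices H : ∀ d : ℕ, ∀ a b : Fin N, (b : ℕ) ≤ (a : ℕ) + d → a ≤ b →
      w a = false → w b = false → cnt w a % 2 = cnt w b % 2 by
    intro a b ha hb
    rcases le_total a b with h | h
    · exact H N a b (by omega) h ha hb
    · exact (H N b a (by omega) h hb ha).symm
  intro d
  induction d with
  | zero =>
    intro a b hd hab _ _
    have : a = b := Fin.ext (by omega)
    rw [this]
  | succ d ih =>
    intro a b hd hab ha hb
    rcases eq_or_lt_of_le hab with h | h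
    · rw [h]
    · by_cases hex : ∃ c : Fin N, a < c ∧ c < b ∧ w c = false
      · obtain ⟨c, hc1, hc2, hc3⟩ := hex
        have h1 := ih a c (by omega) hc1.le ha hc3
        have h2 := ih c b (by omega) hc2.le hc3 hb
        omega
      · push_neg at hex
        have hall : ∀ c : Fin N, a < c → c < b → w c = true := by
          intro c h1 h2
          have := hex c h1 h2
          simpa using this
        have heven := hw a b h ha hb hall
        have hcnt := cnt_add w (show (a:ℕ) ≤ (b:ℕ) from by omega)
        rw [gap_card w h ha hall] at hcnt
        obtain ⟨k, hk⟩ := heven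
        omega

/-! ### Part A: from even configurations to p-i configurations -/

/-- base bit for a row word -/
def baseBit {N : ℕ} (w : Fin N → Bool) : Bool :=
  decide (∃ c : Fin N, w c = false ∧ cnt w (c : ℕ) % 2 = 1)

def pb {N : ℕ} (w : Fin N → Bool) (j : ℕ) : Bool := decide (cnt w j % 2 = 1)

/-- the bond bit at position j of a row word -/
def bond {N : ℕ} (w : Fin N → Bool) (j : ℕ) : Bool := xor (pb w j) (baseBit w)

lemma bond_ne {N : ℕ} (w : Fin N → Bool) (c : Fin N) (hc : w c = true) :
    bond w (c : ℕ) ≠ bond w ((c : ℕ) + 1) := by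
  have h := cnt_succ w c
  rw [if_pos hc] at h
  unfold bond pb
  rw [h]
  rcases Nat.even_or_odd (cnt w (c : ℕ)) with he | ho
  · obtain ⟨k, hk⟩ := he
    rw [decide_eq_false (by omega), decide_eq_true (by omega)]
    cases baseBit w <;> simp
  · obtain ⟨k, hk⟩ := ho
    rw [decide_eq_true (by omega), decide_eq_false (by omega)]
    cases baseBit w <;> simp

lemma bond_false {N : ℕ} {w : Fin N → Bool} (hw : EC1 w) (c : Fin N) (hc : w c = false) :
    bond w (c : ℕ) = false ∧ bond w ((c : ℕ) + 1) = false := by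
  have hpb : pb w (c : ℕ) = baseBit w := by
    unfold pb baseBit
    by_cases ho : cnt w (c : ℕ) % 2 = 1
    · rw [decide_eq_true ho, decide_eq_true ⟨c, hc, ho⟩]
    · rw [decide_eq_false ho, decide_eq_false]
      rintro ⟨c', hc', ho'⟩
      exact ho ((parity_eq hw c c' hc hc') ▸ ho')
  have hstep : cnt w ((c : ℕ) + 1) = cnt w (c : ℕ) := by
    rw [cnt_succ w c, if_neg (by simp [hc]), Nat.add_zero]
  constructor
  · unfold bond; rw [hpb]; cases baseBit w <;> simp
  · unfold bond pb; rw [hstep]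
    unfold pb at hpb; rw [hpb]; cases baseBit w <;> simp

section PartA

variable {N : ℕ} (x : Fin N × Fin N → Bool)

/-- row word -/
def rowW (i : Fin N) : Fin N → Bool := fun c => x (i, c)
/-- column word -/
def colW (j : Fin N) : Fin N → Bool := fun c => x (c, j)

def hBond : Fin N × Fin (N + 1) → Bool := fun p => bond (rowW x p.1) (p.2 : ℕ)
def vBond : Fin (N + 1) × Fin N → Bool := fun p => bond (colW x p.2) (p.1 : ℕ)

lemma piValid_of_even (hx : EvenConstraint N x) : PiValid N (hBond x) (vBond x) := by
  intro i j
  by_cases hxy : x (i, j) = true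
  · right
    constructor
    · show bond (rowW x i) ((j.castSucc : ℕ)) ≠ bond (rowW x i) ((j.succ : ℕ))
      rw [Fin.coe_castSucc, Fin.val_succ]
      exact bond_ne (rowW x i) j hxy
    · show bond (colW x j) ((i.castSucc : ℕ)) ≠ bond (colW x j) ((i.succ : ℕ))
      rw [Fin.coe_castSucc, Fin.val_succ]
      exact bond_ne (colW x j) i hxy
  · left
    rw [Bool.not_eq_true] at hxy
    have hr : EC1 (rowW x i) := fun a b hab ha hb hall => hx.1 i a b hab ha hb hall
    have hc : EC1 (colW x j) := fun a b hab ha hb hall => hx.2 j a b hab ha hb hall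
    have h1 := bond_false hr j hxy
    have h2 := bond_false hc i hxy
    refine ⟨?_, ?_, ?_, ?_⟩
    · show bond (rowW x i) ((j.castSucc : ℕ)) = false
      rw [Fin.coe_castSucc]; exact h1.1
    · show bond (rowW x i) ((j.succ : ℕ)) = false
      rw [Fin.val_succ]; exact h1.2
    · show bond (colW x j) ((i.castSucc : ℕ)) = false
      rw [Fin.coe_castSucc]; exact h2.1
    · show bond (colW x j) ((i.succ : ℕ)) = false
      rw [Fin.val_succ]; exact h2.2

end PartA

lemma hBond_iff {N : ℕ} {x : Fin N × Fin N → Bool} (hx : EvenConstraint N x)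
    (i j : Fin N) :
    x (i, j) = true ↔ hBond x (i, j.castSucc) ≠ hBond x (i, j.succ) := by
  constructor
  · intro ht
    show bond (rowW x i) ((j.castSucc : ℕ)) ≠ bond (rowW x i) ((j.succ : ℕ))
    rw [Fin.coe_castSucc, Fin.val_succ]
    exact bond_ne (rowW x i) j ht
  · intro hne'
    by_contra ht
    rw [Bool.not_eq_true] at ht
    have hr : EC1 (rowW x i) := fun a b hab ha hb hall => hx.1 i a b hab ha hb hall
    have h1 := bond_false hr j ht
    apply hne'
    show bond (rowW x i) ((j.castSucc : ℕ)) = bond (rowW x i) ((j.succ : ℕ))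
    rw [Fin.coe_castSucc, Fin.val_succ, h1.1, h1.2]

lemma zeven_le_zpi (N : ℕ) : Zeven N ≤ Zpi N := by
  classical
  apply Nat.card_le_card_of_injective
    (f := fun (q : {x : Fin N × Fin N → Bool // EvenConstraint N x}) =>
      (⟨(hBond q.1, vBond q.1), piValid_of_even q.1 q.2⟩ :
        {p : (Fin N × Fin (N + 1) → Bool) × (Fin (N + 1) × Fin N → Bool) //
          PiValid N p.1 p.2}))
  intro q1 q2 hq
  simp only [Subtype.mk.injEq, Prod.mk.injEq] at hq
  apply Subtype.ext
  funext ⟨i, j⟩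
  have h1 := hBond_iff q1.2 i j
  have h2 := hBond_iff q2.2 i j
  rw [hq.1] at h1
  cases hb : q1.1 (i, j)
  · cases hb2 : q2.1 (i, j)
    · rfl
    · exact absurd (h1.mpr (h2.mp hb2)) (by rw [hb]; simp)
  · rw [h2.mpr (h1.mp hb)]

/-! ### Part B: from p-i configurations to even configurations -/

lemma bool_flip {a b : Bool} (h : a ≠ b) : b = !a := by
  cases a <;> cases b <;> simp_all

lemma bool_xor_true {a b : Bool} (h : xor a b = true) : b = !a := by
  cases a <;> cases b <;> simp_all

lemma bool_xor_false {a b : Bool} (h : xor a b = false) : a = b := by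
  cases a <;> cases b <;> simp_all

lemma walk' (H : ℕ → Bool) (a : ℕ) :
    ∀ n : ℕ, (∀ k, a ≤ k → k < a + n → H (k + 1) = !(H k)) →
      H (a + n) = xor (decide (Odd n)) (H a) := by
  intro n
  induction n with
  | zero => intro _; simp
  | succ n ih =>
    intro hf
    have h1 : H (a + n + 1) = !(H (a + n)) := hf (a + n) (by omega) (by omega)
    have h2 := ih (fun k hk hk' => hf k hk (by omega))
    rw [show a + (n + 1) = (a + n) + 1 from rfl, h1, h2]
    by_cases h : Odd n
    · rw [decide_eq_true h, decide_eq_false (by simp [Nat.odd_add_one, h])]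
      cases H a <;> simp
    · rw [decide_eq_false h, decide_eq_true (by simp [Nat.odd_add_one, h])]
      cases H a <;> simp

lemma even_gap (H : ℕ → Bool) (a b : ℕ) (hab : a < b)
    (h1 : H (a + 1) = false) (h2 : H b = false)
    (hflip : ∀ k, a < k → k < b → H (k + 1) = !(H k)) : Even (b - a - 1) := by
  have hw := walk' H (a + 1) (b - a - 1) (fun k hk hk' => hflip k (by omega) (by omega))
  rw [show a + 1 + (b - a - 1) = b from by omega, h2, h1] at hw
  rcases Nat.even_or_odd (b - a - 1) with he | ho
  · exact he
  · rw [decide_eq_true ho] at hw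
    simp at hw

section PartB

variable {N : ℕ} (h : Fin N × Fin (N + 1) → Bool) (v : Fin (N + 1) × Fin N → Bool)

/-- spin configuration extracted from a p-i configuration -/
def xOf : Fin N × Fin N → Bool :=
  fun p => xor (h (p.1, p.2.castSucc)) (h (p.1, p.2.succ))

variable {h v}

lemma allfour (hp : PiValid N h v) {i j : Fin N} (hx : xOf h (i, j) = false) :
    h (i, j.castSucc) = false ∧ h (i, j.succ) = false ∧
      v (i.castSucc, j) = false ∧ v (i.succ, j) = false := by
  rcases hp i j with hc | hc
  · exact hc
  · exact absurd (bool_xor_false hx) hc.1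

lemma vflip (hp : PiValid N h v) {i j : Fin N} (hx : xOf h (i, j) = true) :
    v (i.succ, j) = !(v (i.castSucc, j)) := by
  rcases hp i j with hc | hc
  · exfalso
    rw [show xOf h (i,j) = xor (h (i, j.castSucc)) (h (i, j.succ)) from rfl, hc.1, hc.2.1] at hx
    simp at hx
  · exact bool_flip hc.2

lemma hflip {i j : Fin N} (hx : xOf h (i, j) = true) :
    h (i, j.succ) = !(h (i, j.castSucc)) :=
  bool_xor_true hx

lemma evenConstraint_xOf (hp : PiValid N h v) : EvenConstraint N (xOf h) := by
  constructor
  · -- rows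
    intro i a b hab ha hb hall
    set H : ℕ → Bool := fun k => if hk : k < N + 1 then h (i, ⟨k, hk⟩) else false with hH
    have hbN : (b : ℕ) < N := b.isLt
    apply even_gap H (a : ℕ) (b : ℕ) hab
    · have := (allfour hp ha).2.1
      rw [hH]
      simp only [dif_pos (show (a:ℕ) + 1 < N + 1 by omega)]
      exact this
    · have := (allfour hp hb).1
      rw [hH]
      simp only [dif_pos (show (b:ℕ) < N + 1 by omega)]
      exact this
    · intro k hk1 hk2
      have hkN : k < N := by omega
      have hx : xOf h (i, ⟨k, hkN⟩) = true := hall ⟨k, hkN⟩ hk1 hk2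
      have := hflip hx
      rw [hH]
      simp only [dif_pos (show k + 1 < N + 1 by omega), dif_pos (show k < N + 1 by omega)]
      exact this
  · -- columns
    intro j a b hab ha hb hall
    set H : ℕ → Bool := fun k => if hk : k < N + 1 then v (⟨k, hk⟩, j) else false with hH
    have hbN : (b : ℕ) < N := b.isLt
    apply even_gap H (a : ℕ) (b : ℕ) hab
    · have := (allfour hp ha).2.2.2
      rw [hH]
      simp only [dif_pos (show (a:ℕ) + 1 < N + 1 by omega)]
      exact this
    · have := (allfour hp hb).2.2.1
      rw [hH]
      simp only [dif_pos (show (b:ℕ) < N + 1 by omega)]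
      exact this
    · intro k hk1 hk2
      have hkN : k < N := by omega
      have hx : xOf h (⟨k, hkN⟩, j) = true := hall ⟨k, hkN⟩ hk1 hk2
      have := vflip hp hx
      rw [hH]
      simp only [dif_pos (show k + 1 < N + 1 by omega), dif_pos (show k < N + 1 by omega)]
      exact this

end PartB

lemma zpi_le (N : ℕ) : Zpi N ≤ 2 ^ (2 * N) * Zeven N := by
  classical
  have key : Zpi N ≤ Nat.card ((Fin N → Bool) × (Fin N → Bool) ×
      {x : Fin N × Fin N → Bool // EvenConstraint N x}) := by
    apply Nat.card_le_card_of_injective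
      (f := fun (q : {p : (Fin N × Fin (N + 1) → Bool) × (Fin (N + 1) × Fin N → Bool) //
          PiValid N p.1 p.2}) =>
        ((fun i : Fin N => q.1.1 (i, 0)), (fun j : Fin N => q.1.2 (0, j)),
          ⟨xOf q.1.1, evenConstraint_xOf q.2⟩))
    intro q1 q2 hq
    simp only [Prod.mk.injEq, Subtype.mk.injEq] at hq
    obtain ⟨hb1, hb2, hx⟩ := hq
    apply Subtype.ext
    have hh : q1.1.1 = q2.1.1 := by
      funext ⟨i, j⟩
      suffices H : ∀ k (hk : k < N + 1), q1.1.1 (i, ⟨k, hk⟩) = q2.1.1 (i, ⟨k, hk⟩) by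
        have := H j.val j.isLt
        rwa [Fin.eta] at this
      intro k
      induction k with
      | zero =>
        intro hk
        have := congrFun hb1 i
        simpa using this
      | succ k ih =>
        intro hk
        have hkN : k < N := by omega
        have hkk : k < N + 1 := by omega
        have hcs : (⟨k, hkN⟩ : Fin N).succ = ⟨k + 1, hk⟩ := rfl
        have hcc : (⟨k, hkN⟩ : Fin N).castSucc = ⟨k, hkk⟩ := rfl
        cases hxc : xOf q1.1.1 (i, ⟨k, hkN⟩)
        · have a1 := (allfour q1.2 hxc).2.1
          have a2 := (allfour q2.2 (by rw [← hx]; exact hxc)).2.1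
          rw [hcs] at a1 a2
          rw [a1, a2]
        · have a1 := hflip hxc
          have a2 := hflip (show xOf q2.1.1 (i, ⟨k, hkN⟩) = true by rw [← hx]; exact hxc)
          rw [hcs, hcc] at a1 a2
          rw [a1, a2, ih hkk]
    have hv : q1.1.2 = q2.1.2 := by
      funext ⟨i, j⟩
      suffices H : ∀ k (hk : k < N + 1), q1.1.2 (⟨k, hk⟩, j) = q2.1.2 (⟨k, hk⟩, j) by
        have := H i.val i.isLt
        rwa [Fin.eta] at this
      intro k
      induction k with
      | zero =>
        intro hk
        have := congrFun hb2 j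
        simpa using this
      | succ k ih =>
        intro hk
        have hkN : k < N := by omega
        have hkk : k < N + 1 := by omega
        have hcs : (⟨k, hkN⟩ : Fin N).succ = ⟨k + 1, hk⟩ := rfl
        have hcc : (⟨k, hkN⟩ : Fin N).castSucc = ⟨k, hkk⟩ := rfl
        cases hxc : xOf q1.1.1 (⟨k, hkN⟩, j)
        · have a1 := (allfour q1.2 hxc).2.2.2
          have a2 := (allfour q2.2 (by rw [← hx]; exact hxc)).2.2.2
          rw [hcs] at a1 a2
          rw [a1, a2]
        · have a1 := vflip q1.2 hxc
          have a2 := vflip q2.2 (show xOf q2.1.1 (⟨k, hkN⟩, j) = true by rw [← hx]; exact hxc)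
          rw [hcs, hcc] at a1 a2
          rw [a1, a2, ih hkk]
    exact Prod.ext hh hv
  calc Zpi N ≤ _ := key
    _ = 2 ^ (2 * N) * Zeven N := by
      rw [Nat.card_prod, Nat.card_prod]
      have : Nat.card (Fin N → Bool) = 2 ^ N := by
        rw [Nat.card_eq_fintype_card]
        simp [Fintype.card_fun]
      rw [this, Zeven, ← mul_assoc, ← pow_add, two_mul]

/-! ### Analytic part -/

lemma zeven_pos (N : ℕ) : 0 < Zeven N := by
  have : Nonempty {x : Fin N × Fin N → Bool // EvenConstraint N x} :=
    ⟨⟨fun _ => true,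
      ⟨fun i a b _ ha _ _ => by simp at ha, fun j a b _ ha _ _ => by simp at ha⟩⟩⟩
  exact Nat.card_pos

lemma zeven_le_pow (N : ℕ) : Zeven N ≤ 2 ^ (N * N) := by
  have h : Zeven N ≤ Nat.card (Fin N × Fin N → Bool) :=
    Nat.card_le_card_of_injective Subtype.val Subtype.val_injective
  rwa [Nat.card_eq_fintype_card, Fintype.card_fun, Fintype.card_bool, Fintype.card_prod,
    Fintype.card_fin] at h

lemma even_pi_growth_rates_equal_aux :
    (∀ N : ℕ, 1 ≤ N → Zeven N ≤ Zpi N ∧ Zpi N ≤ 2 ^ (2 * N) * Zeven N) ∧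
    Filter.limsup (fun N : ℕ => (Zeven N : ℝ) ^ (1 / (N : ℝ) ^ 2)) Filter.atTop =
      Filter.limsup (fun N : ℕ => (Zpi N : ℝ) ^ (1 / (N : ℝ) ^ 2)) Filter.atTop := by
  refine ⟨fun N _ => ⟨zeven_le_zpi N, zpi_le N⟩, ?_⟩
  set f : ℕ → ℝ := fun N => (Zeven N : ℝ) ^ (1 / (N : ℝ) ^ 2) with hf
  set g : ℕ → ℝ := fun N => (Zpi N : ℝ) ^ (1 / (N : ℝ) ^ 2) with hg
  have hfnn : ∀ N, 0 ≤ f N := fun N => Real.rpow_nonneg (Nat.cast_nonneg _) _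
  have hgnn : ∀ N, 0 ≤ g N := fun N => Real.rpow_nonneg (Nat.cast_nonneg _) _
  have hexp : ∀ N : ℕ, (0:ℝ) ≤ 1 / (N : ℝ) ^ 2 := fun N => by positivity
  -- f ≤ g pointwise
  have hfg : ∀ N, f N ≤ g N := fun N =>
    Real.rpow_le_rpow (Nat.cast_nonneg _) (Nat.cast_le.mpr (zeven_le_zpi N)) (hexp N)
  -- f N ≤ 2 for N ≥ 1
  have hf2 : ∀ N : ℕ, 1 ≤ N → f N ≤ 2 := by
    intro N hN
    have hN0 : (N : ℝ) ≠ 0 := Nat.cast_ne_zero.mpr (by omega)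
    have h1 : f N ≤ ((2 ^ (N * N) : ℕ) : ℝ) ^ (1 / (N : ℝ) ^ 2) :=
      Real.rpow_le_rpow (Nat.cast_nonneg _) (Nat.cast_le.mpr (zeven_le_pow N)) (hexp N)
    calc f N ≤ _ := h1
      _ = 2 := by
        push_cast
        rw [← Real.rpow_natCast (2:ℝ) (N * N), ← Real.rpow_mul (by norm_num)]
        rw [show ((N * N : ℕ) : ℝ) * (1 / (N:ℝ)^2) = 1 by push_cast; field_simp]
        exact Real.rpow_one 2
  -- g N ≤ 2^(2/N) * f N for N ≥ 1
  have hgf : ∀ N : ℕ, 1 ≤ N → g N ≤ (2:ℝ) ^ ((2:ℝ) / N) * f N := by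
    intro N hN
    have hN0 : (N : ℝ) ≠ 0 := Nat.cast_ne_zero.mpr (by omega)
    have h1 : g N ≤ ((2 ^ (2 * N) * Zeven N : ℕ) : ℝ) ^ (1 / (N : ℝ) ^ 2) :=
      Real.rpow_le_rpow (Nat.cast_nonneg _) (Nat.cast_le.mpr (zpi_le N)) (hexp N)
    calc g N ≤ _ := h1
      _ = (2:ℝ) ^ ((2:ℝ) / N) * f N := by
        push_cast
        rw [Real.mul_rpow (by positivity) (Nat.cast_nonneg _)]
        congr 1
        rw [← Real.rpow_natCast (2:ℝ) (2 * N), ← Real.rpow_mul (by norm_num)]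
        congr 1
        push_cast
        field_simp
  -- 2^(2/N) tends to 1
  have htend : Filter.Tendsto (fun N : ℕ => (2:ℝ) ^ ((2:ℝ) / N)) Filter.atTop (nhds 1) := by
    have h0 : Filter.Tendsto (fun N : ℕ => (2:ℝ) / N) Filter.atTop (nhds 0) :=
      tendsto_const_div_atTop_nhds_zero_nat 2
    have hc : ContinuousAt (fun t : ℝ => (2:ℝ) ^ t) 0 :=
      Real.continuousAt_const_rpow (by norm_num)
    have := hc.tendsto.comp h0
    simpa [Real.rpow_zero, Function.comp_def] using this
  -- boundedness facts
  have hfb : Filter.IsBoundedUnder (· ≤ ·) Filter.atTop f := by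
    apply Filter.isBoundedUnder_of_eventually_le (a := 2)
    filter_upwards [Filter.eventually_ge_atTop 1] with N hN
    exact hf2 N hN
  have hgb : Filter.IsBoundedUnder (· ≤ ·) Filter.atTop g := by
    apply Filter.isBoundedUnder_of_eventually_le (a := 4)
    have h2 : ∀ᶠ N : ℕ in Filter.atTop, (2:ℝ) ^ ((2:ℝ) / N) ≤ 2 := by
      filter_upwards [Filter.eventually_ge_atTop 2] with N hN
      calc (2:ℝ) ^ ((2:ℝ) / N) ≤ (2:ℝ) ^ (1:ℝ) := by
            apply Real.rpow_le_rpow_of_exponent_le (by norm_num)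
            rw [div_le_one (by positivity)]
            exact_mod_cast hN
        _ = 2 := Real.rpow_one 2
    filter_upwards [Filter.eventually_ge_atTop 1, h2] with N hN h2N
    calc g N ≤ (2:ℝ) ^ ((2:ℝ) / N) * f N := hgf N hN
      _ ≤ 2 * 2 := mul_le_mul h2N (hf2 N hN) (hfnn N) (by norm_num)
      _ = 4 := by norm_num
  have hfcb : Filter.IsCoboundedUnder (· ≤ ·) Filter.atTop f :=
    Filter.isCoboundedUnder_le_of_le Filter.atTop (x := 0) hfnn
  have hgcb : Filter.IsCoboundedUnder (· ≤ ·) Filter.atTop g :=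
    Filter.isCoboundedUnder_le_of_le Filter.atTop (x := 0) hgnn
  apply le_antisymm
  · exact Filter.limsup_le_limsup (Filter.Eventually.of_forall hfg) hfcb hgb
  · -- limsup g ≤ limsup f
    set L := Filter.limsup f Filter.atTop with hL
    have key : ∀ ε : ℝ, 0 < ε → Filter.limsup g Filter.atTop ≤ L + ε := by
      intro ε hε
      have h1 : ∀ᶠ N : ℕ in Filter.atTop, f N < L + ε / 2 :=
        Filter.eventually_lt_of_limsup_lt (by linarith) hfb
      have h2 : ∀ᶠ N : ℕ in Filter.atTop, g N ≤ f N + ε / 2 := by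
        have hnear : ∀ᶠ N : ℕ in Filter.atTop, (2:ℝ) ^ ((2:ℝ) / N) - 1 ≤ ε / 4 := by
          have := htend.sub (tendsto_const_nhds (x := (1:ℝ)))
          simp only [sub_self] at this
          have := this.eventually (eventually_le_nhds (by linarith : (0:ℝ) < ε/4))
          exact this
        filter_upwards [Filter.eventually_ge_atTop 1, hnear] with N hN hnN
        have hc1 : (1:ℝ) ≤ (2:ℝ) ^ ((2:ℝ) / N) := Real.one_le_rpow (by norm_num) (by positivity)
        calc g N ≤ (2:ℝ) ^ ((2:ℝ) / N) * f N := hgf N hN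
          _ = f N + ((2:ℝ) ^ ((2:ℝ) / N) - 1) * f N := by ring
          _ ≤ f N + (ε / 4) * 2 := by
              have : ((2:ℝ) ^ ((2:ℝ) / N) - 1) * f N ≤ (ε / 4) * 2 :=
                mul_le_mul hnN (hf2 N hN) (hfnn N) (by linarith)
              linarith
          _ = f N + ε / 2 := by ring
      apply Filter.limsup_le_of_le hgcb
      filter_upwards [h1, h2] with N hN1 hN2
      linarith
    by_contra hcon
    push_neg at hcon
    have := key ((Filter.limsup g Filter.atTop - L) / 2) (by linarith)
    linarith



/-- For every `N ≥ 1`, `Zeven(N) ≤ Zpi(N) ≤ 2^(2N) · Zeven(N)`; consequently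
the growth rates (as `limsup`s) of the even and `p`-`i` models are equal. -/
theorem even_pi_growth_rates_equal :
    (∀ N : ℕ, 1 ≤ N → Zeven N ≤ Zpi N ∧ Zpi N ≤ 2 ^ (2 * N) * Zeven N) ∧
    limsup (fun N : ℕ => (Zeven N : ℝ) ^ (1 / (N : ℝ) ^ 2)) atTop =
      limsup (fun N : ℕ => (Zpi N : ℝ) ^ (1 / (N : ℝ) ^ 2)) atTop :=
  even_pi_growth_rates_equal_aux
end

section
/- For every N ≥ 1, the number of even-face configurations on the (N+1)×(N+1) array of faces is exactly twice the number of p-i configurations on the N×N grid: Zef(N) = 2 · Zpi(N). The correspondence sends a face configuration f to the bond configuration in which a bond has state i precisely when the two faces it separates carry different states (h(i,j) = (f(i,j) ≠ f(i+1,j)) for horizontal bonds and v(i,j) = (f(i,j) ≠ f(i,j+1)) for vertical bonds), and this map is exactly 2-to-1 from even-face configurations onto valid p-i configurations. -/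
/-- The even-face constraint: the four face states around any vertex never
contain exactly two `true`s. -/
def EvenFace (N : ℕ) (f : Fin (N + 1) × Fin (N + 1) → Bool) : Prop :=
  ∀ i j : Fin N,
    (f (i.castSucc, j.castSucc)).toNat + (f (i.castSucc, j.succ)).toNat +
      (f (i.succ, j.castSucc)).toNat + (f (i.succ, j.succ)).toNat ≠ 2

/-- The number of even-face configurations on the `(N+1) × (N+1)` array of
faces. -/
noncomputable def Zef (N : ℕ) : ℕ :=
  Nat.card {f : Fin (N + 1) × Fin (N + 1) → Bool // EvenFace N f}

/-- The faces-to-bonds map: a bond is in state `i` (`true`) precisely when the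
two faces it separates carry different states. -/
def facesToBonds (N : ℕ) (f : Fin (N + 1) × Fin (N + 1) → Bool) :
    (Fin N × Fin (N + 1) → Bool) × (Fin (N + 1) × Fin N → Bool) :=
  (fun p => f (p.1.castSucc, p.2) != f (p.1.succ, p.2),
   fun p => f (p.1, p.2.castSucc) != f (p.1, p.2.succ))

section Aux

variable {N : ℕ} (h : Fin N × Fin (N + 1) → Bool) (v : Fin (N + 1) × Fin N → Bool)

def liftH (i j : ℕ) : Bool :=
  if hi : i < N then if hj : j < N + 1 then h (⟨i, hi⟩, ⟨j, hj⟩) else false else false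

def liftV (i j : ℕ) : Bool :=
  if hi : i < N + 1 then if hj : j < N then v (⟨i, hi⟩, ⟨j, hj⟩) else false else false

def Hacc : ℕ → Bool
  | 0 => false
  | i + 1 => xor (Hacc i) (liftH h i 0)

def Vacc (i : ℕ) : ℕ → Bool
  | 0 => false
  | j + 1 => xor (Vacc i j) (liftV v i j)

def build (b : Bool) : Fin (N + 1) × Fin (N + 1) → Bool :=
  fun p => xor b (xor (Hacc h p.1.1) (Vacc v p.1.1 p.2.1))

lemma curl (hpv : PiValid N h v) (i j : Fin N) :
    xor (h (i, j.castSucc)) (h (i, j.succ)) = xor (v (i.castSucc, j)) (v (i.succ, j)) := by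
  rcases hpv i j with ⟨h1, h2, h3, h4⟩ | ⟨h1, h2⟩
  · simp [h1, h2, h3, h4]
  · cases hA : h (i, j.castSucc) <;> cases hB : h (i, j.succ) <;>
      cases hC : v (i.castSucc, j) <;> cases hD : v (i.succ, j) <;> simp_all

lemma colDiff (hpv : PiValid N h v) (i : Fin N) :
    ∀ j : ℕ, j ≤ N →
      xor (Vacc v i.1 j) (Vacc v (i.1 + 1) j) = xor (liftH h i.1 0) (liftH h i.1 j) := by
  intro j
  induction j with
  | zero => intro _; simp [Vacc]
  | succ j ih =>
    intro hj
    have hjN : j < N := hj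
    have hiN1 : i.1 < N + 1 := Nat.lt_succ_of_lt i.2
    have hi1 : i.1 + 1 < N + 1 := Nat.succ_lt_succ i.2
    have e1 : liftV v i.1 j = v (i.castSucc, ⟨j, hjN⟩) := by
      simp [liftV, hiN1, hjN]; rfl
    have e2 : liftV v (i.1 + 1) j = v (i.succ, ⟨j, hjN⟩) := by
      simp [liftV, hi1, hjN]; rfl
    have e3 : liftH h i.1 j = h (i, (⟨j, hjN⟩ : Fin N).castSucc) := by
      simp [liftH, i.2, Nat.lt_succ_of_lt hjN]
    have e4 : liftH h i.1 (j + 1) = h (i, (⟨j, hjN⟩ : Fin N).succ) := by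
      simp [liftH, i.2, Nat.succ_lt_succ hjN]
    have hc := curl h v hpv i ⟨j, hjN⟩
    have ihj := ih (Nat.le_of_lt hj)
    show xor (xor (Vacc v i.1 j) (liftV v i.1 j))
        (xor (Vacc v (i.1 + 1) j) (liftV v (i.1 + 1) j)) = _
    rw [e1, e2, e4]
    rw [e3] at ihj
    generalize h (i, (⟨j, hjN⟩ : Fin N).castSucc) = A at *
    generalize h (i, (⟨j, hjN⟩ : Fin N).succ) = B at *
    generalize v (i.castSucc, (⟨j, hjN⟩ : Fin N)) = C at *
    generalize v (i.succ, (⟨j, hjN⟩ : Fin N)) = D at *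
    generalize Vacc v i.1 j = X at *
    generalize Vacc v (i.1+1) j = Y at *
    generalize liftH h i.1 0 = Z at *
    cases A <;> cases B <;> cases C <;> cases D <;> cases X <;> cases Y <;> cases Z <;>
      simp_all

lemma build_bonds (hpv : PiValid N h v) (b : Bool) :
    facesToBonds N (build h v b) = (h, v) := by
  unfold facesToBonds build
  refine Prod.ext ?_ ?_ <;> funext p <;> obtain ⟨i, j⟩ := p <;> simp only
  · -- horizontal
    have hcs : (i.castSucc : Fin (N+1)).1 = i.1 := rfl
    have hs : (i.succ : Fin (N+1)).1 = i.1 + 1 := rfl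
    rw [hcs, hs]
    have eH : Hacc h (i.1 + 1) = xor (Hacc h i.1) (liftH h i.1 0) := rfl
    have hcd := colDiff h v hpv i j.1 (Nat.lt_succ_iff.mp j.2)
    have e3 : liftH h i.1 j.1 = h (i, j) := by
      simp [liftH, i.2, j.2]
    rw [eH]
    rw [e3] at hcd
    generalize h (i, j) = A at *
    generalize Hacc h i.1 = H at *
    generalize Vacc v i.1 j.1 = X at *
    generalize Vacc v (i.1+1) j.1 = Y at *
    generalize liftH h i.1 0 = Z at *
    cases A <;> cases b <;> cases H <;> cases X <;> cases Y <;> cases Z <;> simp_all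
  · -- vertical
    have hcs : (j.castSucc : Fin (N+1)).1 = j.1 := rfl
    have hs : (j.succ : Fin (N+1)).1 = j.1 + 1 := rfl
    rw [hcs, hs]
    have eV : Vacc v i.1 (j.1 + 1) = xor (Vacc v i.1 j.1) (liftV v i.1 j.1) := rfl
    have e1 : liftV v i.1 j.1 = v (i, j) := by
      simp [liftV, i.2, j.2]
    rw [eV, e1]
    generalize v (i, j) = A
    generalize Hacc h i.1 = H
    generalize Vacc v i.1 j.1 = X
    cases A <;> cases b <;> cases H <;> cases X <;> simp_all

lemma build_zero (b : Bool) : build h v b (0, 0) = b := by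
  simp [build, Hacc, Vacc]

lemma eq_of_bonds (f f' : Fin (N + 1) × Fin (N + 1) → Bool)
    (hb : facesToBonds N f = facesToBonds N f') (h0 : f (0, 0) = f' (0, 0)) : f = f' := by
  have hH : ∀ (i : Fin N) (j : Fin (N + 1)),
      (f (i.castSucc, j) != f (i.succ, j)) = (f' (i.castSucc, j) != f' (i.succ, j)) := by
    intro i j
    exact congrFun (congrArg Prod.fst hb) (i, j)
  have hV : ∀ (i : Fin (N + 1)) (j : Fin N),
      (f (i, j.castSucc) != f (i, j.succ)) = (f' (i, j.castSucc) != f' (i, j.succ)) := by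
    intro i j
    exact congrFun (congrArg Prod.snd hb) (i, j)
  have col0 : ∀ i : Fin (N + 1), f (i, 0) = f' (i, 0) := by
    intro i
    induction i using Fin.induction with
    | zero => exact h0
    | succ i ih =>
      have := hH i 0
      revert this ih
      cases f (i.castSucc, 0) <;> cases f (i.succ, 0) <;>
        cases f' (i.castSucc, 0) <;> cases f' (i.succ, 0) <;> simp_all
  funext p
  obtain ⟨i, j⟩ := p
  induction j using Fin.induction with
  | zero => exact col0 i
  | succ j ih =>
    have := hV i j
    revert this ih
    cases f (i, j.castSucc) <;> cases f (i, j.succ) <;>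
      cases f' (i, j.castSucc) <;> cases f' (i, j.succ) <;> simp_all

end Aux

section Aux2
variable {N : ℕ}

lemma part1 (f : Fin (N + 1) × Fin (N + 1) → Bool) (hf : EvenFace N f) :
    PiValid N (facesToBonds N f).1 (facesToBonds N f).2 := by
  intro i j
  have := hf i j
  simp only [facesToBonds]
  revert this
  cases f (i.castSucc, j.castSucc) <;> cases f (i.castSucc, j.succ) <;>
    cases f (i.succ, j.castSucc) <;> cases f (i.succ, j.succ) <;> simp_all

lemma even_of_bonds (h : Fin N × Fin (N + 1) → Bool) (v : Fin (N + 1) × Fin N → Bool)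
    (hpv : PiValid N h v) (f : Fin (N + 1) × Fin (N + 1) → Bool)
    (hb : facesToBonds N f = (h, v)) : EvenFace N f := by
  intro i j
  have := hpv i j
  rw [show h = (facesToBonds N f).1 from (congrArg Prod.fst hb).symm,
    show v = (facesToBonds N f).2 from (congrArg Prod.snd hb).symm] at this
  simp only [facesToBonds] at this
  revert this
  cases f (i.castSucc, j.castSucc) <;> cases f (i.castSucc, j.succ) <;>
    cases f (i.succ, j.castSucc) <;> cases f (i.succ, j.succ) <;> simp_all

lemma fiber_card (h : Fin N × Fin (N + 1) → Bool) (v : Fin (N + 1) × Fin N → Bool)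
    (hpv : PiValid N h v) :
    Nat.card {f : Fin (N + 1) × Fin (N + 1) → Bool //
      EvenFace N f ∧ facesToBonds N f = (h, v)} = 2 := by
  have e : {f : Fin (N + 1) × Fin (N + 1) → Bool //
      EvenFace N f ∧ facesToBonds N f = (h, v)} ≃ Bool :=
    { toFun := fun f => f.1 (0, 0)
      invFun := fun b => ⟨build h v b, even_of_bonds h v hpv _ (build_bonds h v hpv b),
        build_bonds h v hpv b⟩
      left_inv := by
        rintro ⟨f, hf, hb⟩
        ext p
        have := eq_of_bonds (build h v (f (0, 0))) f
          (by rw [build_bonds h v hpv, hb]) (build_zero h v (f (0, 0)))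
        simpa using congrFun this p
      right_inv := fun b => build_zero h v b }
  rw [Nat.card_congr e]
  simp

instance instDecEvenFace (N : ℕ) : DecidablePred (EvenFace N) := fun f => by
  unfold EvenFace; infer_instance

instance instDecPiValid (N : ℕ) :
    DecidablePred (fun p : (Fin N × Fin (N + 1) → Bool) × (Fin (N + 1) × Fin N → Bool) =>
      PiValid N p.1 p.2) := fun p => by
  unfold PiValid; infer_instance

end Aux2

/-- For every `N ≥ 1`: the faces-to-bonds map sends even-face configurations
to valid `p`-`i` configurations, it is exactly 2-to-1 onto the valid `p`-`i`
configurations, and hence `Zef(N) = 2 · Zpi(N)`. -/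
theorem evenFace_eq_two_mul_pi (N : ℕ) (hN : 1 ≤ N) :
    (∀ f : Fin (N + 1) × Fin (N + 1) → Bool, EvenFace N f →
      PiValid N (facesToBonds N f).1 (facesToBonds N f).2) ∧
    (∀ h : Fin N × Fin (N + 1) → Bool, ∀ v : Fin (N + 1) × Fin N → Bool,
      PiValid N h v →
      Nat.card {f : Fin (N + 1) × Fin (N + 1) → Bool //
        EvenFace N f ∧ facesToBonds N f = (h, v)} = 2) ∧
    Zef N = 2 * Zpi N := by
  refine ⟨fun f hf => part1 f hf, fun h v hpv => fiber_card h v hpv, ?_⟩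
  let g : {f : Fin (N + 1) × Fin (N + 1) → Bool // EvenFace N f} →
      {q : (Fin N × Fin (N + 1) → Bool) × (Fin (N + 1) × Fin N → Bool) //
        PiValid N q.1 q.2} := fun f => ⟨facesToBonds N f.1, part1 f.1 f.2⟩
  have e : {f : Fin (N + 1) × Fin (N + 1) → Bool // EvenFace N f} ≃
      Σ p : {q : (Fin N × Fin (N + 1) → Bool) × (Fin (N + 1) × Fin N → Bool) //
        PiValid N q.1 q.2},
      {f : Fin (N + 1) × Fin (N + 1) → Bool // EvenFace N f ∧ facesToBonds N f = p.1} :=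
    (Equiv.sigmaFiberEquiv g).symm.trans (Equiv.sigmaCongrRight fun p =>
      { toFun := fun x => ⟨x.1.1, x.1.2, congrArg Subtype.val x.2⟩
        invFun := fun y => ⟨⟨y.1, y.2.1⟩, Subtype.ext y.2.2⟩
        left_inv := fun x => rfl
        right_inv := fun y => rfl })
  unfold Zef Zpi
  rw [Nat.card_congr e]
  rw [Nat.card_eq_fintype_card, Nat.card_eq_fintype_card, Fintype.card_sigma]
  have key : ∀ p : {q : (Fin N × Fin (N + 1) → Bool) × (Fin (N + 1) × Fin N → Bool) //
      PiValid N q.1 q.2},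
      Fintype.card {f : Fin (N + 1) × Fin (N + 1) → Bool //
        EvenFace N f ∧ facesToBonds N f = p.1} = 2 := by
    rintro ⟨⟨h, v⟩, hp⟩
    rw [← Nat.card_eq_fintype_card]
    exact fiber_card h v hp
  calc (∑ p : {q : (Fin N × Fin (N + 1) → Bool) × (Fin (N + 1) × Fin N → Bool) //
        PiValid N q.1 q.2},
        Fintype.card {f : Fin (N + 1) × Fin (N + 1) → Bool //
          EvenFace N f ∧ facesToBonds N f = p.1})
      = ∑ _p : {q : (Fin N × Fin (N + 1) → Bool) × (Fin (N + 1) × Fin N → Bool) //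
        PiValid N q.1 q.2}, 2 := Finset.sum_congr rfl fun p _ => key p
    _ = Fintype.card {q : (Fin N × Fin (N + 1) → Bool) × (Fin (N + 1) × Fin N → Bool) //
        PiValid N q.1 q.2} * 2 := by
        rw [Finset.sum_const, smul_eq_mul, Finset.card_univ]
    _ = _ := mul_comm _ _
end

section
/- For every n ≥ 0, a_n = 2 · b_n: the number of one-dimensional Q-charge words with n steps is exactly twice the number of one-dimensional p-i words with n steps. (This follows from the 2-to-1 graph homomorphism from the path graph on {0,1,2,3} onto the graph on {p,i} with edges {p,p} and {p,i}, sending 0 and 3 to i and sending 1 and 2 to p.) -/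
/-- The number of one-dimensional `Q`-charge words with `n` steps: sequences
`w : Fin (n+1) → Fin 4` whose consecutive entries differ by exactly 1. -/
noncomputable def qChargeWordCount (n : ℕ) : ℕ :=
  Nat.card {w : Fin (n + 1) → Fin 4 //
    ∀ k : Fin n, |((w k.succ : ℤ)) - ((w k.castSucc : ℤ))| = 1}

/-- The number of one-dimensional `p`-`i` words with `n` steps: sequences
`u : Fin (n+1) → Bool` with no two consecutive entries both `true`. -/
noncomputable def piWordCount (n : ℕ) : ℕ :=
  Nat.card {u : Fin (n + 1) → Bool //
    ∀ k : Fin n, ¬(u k.castSucc = true ∧ u k.succ = true)}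

namespace QCAux

def cls (x : Fin 4) : Bool := decide ((x : ℕ) = 0 ∨ (x : ℕ) = 3)
def half (x : Fin 4) : Bool := decide (2 ≤ (x : ℕ))

def step : Fin 4 → Bool → Fin 4
  | 0, _ => 1
  | 1, true => 0
  | 1, false => 2
  | 2, true => 3
  | 2, false => 1
  | 3, _ => 2

def start : Bool → Bool → Fin 4
  | b, true => if b then 3 else 0
  | b, false => if b then 2 else 1

lemma step_adj (x : Fin 4) (b : Bool) : |((step x b : ℤ)) - (x : ℤ)| = 1 := by
  revert b; revert x; decide

lemma step_cls (x : Fin 4) (b : Bool) (h : ¬(cls x = true ∧ b = true)) :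
    cls (step x b) = b := by
  revert h; revert b; revert x; decide

lemma start_cls (b u : Bool) : cls (start b u) = u := by revert u; revert b; decide

lemma start_half (b u : Bool) : half (start b u) = b := by revert u; revert b; decide

lemma adj_not_both (x y : Fin 4) (h : |((y : ℤ)) - (x : ℤ)| = 1) :
    ¬(cls x = true ∧ cls y = true) := by
  revert h; revert y; revert x; decide

lemma adj_det (x y y' : Fin 4) (h : |((y : ℤ)) - (x : ℤ)| = 1)
    (h' : |((y' : ℤ)) - (x : ℤ)| = 1) (hc : cls y = cls y') : y = y' := by
  revert hc; revert h'; revert h; revert y'; revert y; revert x; decide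

lemma det0 (x y : Fin 4) (h1 : half x = half y) (h2 : cls x = cls y) : x = y := by
  revert h2; revert h1; revert y; revert x; decide

variable {n : ℕ}

def uext (u : Fin (n + 1) → Bool) (j : ℕ) : Bool :=
  if h : j < n + 1 then u ⟨j, h⟩ else false

def W (b : Bool) (u : Fin (n + 1) → Bool) : ℕ → Fin 4
  | 0 => start b (uext u 0)
  | k + 1 => step (W b u k) (uext u (k + 1))

lemma W_cls (b : Bool) (u : Fin (n + 1) → Bool)
    (hu : ∀ k : Fin n, ¬(u k.castSucc = true ∧ u k.succ = true)) :
    ∀ j, j ≤ n → cls (W b u j) = uext u j := by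
  intro j
  induction j with
  | zero => intro _; simp [W, start_cls]
  | succ j ih =>
    intro hj
    have hj' : j ≤ n := Nat.le_of_succ_le hj
    have hjn : j < n := hj
    show cls (step (W b u j) (uext u (j + 1))) = uext u (j + 1)
    apply step_cls
    rw [ih hj']
    have := hu ⟨j, hjn⟩
    simpa [uext, Nat.lt_succ_of_le hj', Nat.succ_lt_succ hjn, Fin.castSucc, Fin.succ]
      using this

lemma inj_aux (w w' : Fin (n + 1) → Fin 4)
    (hw : ∀ k : Fin n, |((w k.succ : ℤ)) - ((w k.castSucc : ℤ))| = 1)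
    (hw' : ∀ k : Fin n, |((w' k.succ : ℤ)) - ((w' k.castSucc : ℤ))| = 1)
    (h0 : half (w 0) = half (w' 0))
    (hc : ∀ j, cls (w j) = cls (w' j)) : w = w' := by
  funext j
  obtain ⟨j, hj⟩ := j
  induction j with
  | zero =>
    have : w 0 = w' 0 := det0 _ _ h0 (hc 0)
    simpa [show (⟨0, hj⟩ : Fin (n+1)) = 0 from rfl] using this
  | succ j ih =>
    have hjn : j < n := Nat.lt_of_succ_lt_succ hj
    have hj' : j < n + 1 := Nat.lt_of_succ_lt hj
    have hkey := ih hj'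
    have h1 := hw ⟨j, hjn⟩
    have h2 := hw' ⟨j, hjn⟩
    have hsucc : (⟨j, hjn⟩ : Fin n).succ = ⟨j + 1, hj⟩ := rfl
    have hcast : (⟨j, hjn⟩ : Fin n).castSucc = ⟨j, hj'⟩ := rfl
    rw [hsucc, hcast] at h1 h2
    rw [hkey] at h1
    exact adj_det _ _ _ h1 h2 (hc ⟨j + 1, hj⟩)

def E : {w : Fin (n + 1) → Fin 4 //
      ∀ k : Fin n, |((w k.succ : ℤ)) - ((w k.castSucc : ℤ))| = 1} ≃
    Bool × {u : Fin (n + 1) → Bool //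
      ∀ k : Fin n, ¬(u k.castSucc = true ∧ u k.succ = true)} where
  toFun w := ⟨half (w.1 0), fun j => cls (w.1 j), fun k => adj_not_both _ _ (w.2 k)⟩
  invFun p := ⟨fun j => W p.1 p.2.1 j, by
    intro k
    have hsucc : ((k.succ : Fin (n+1)) : ℕ) = (k : ℕ) + 1 := rfl
    have hcast : ((k.castSucc : Fin (n+1)) : ℕ) = (k : ℕ) := rfl
    show |((W p.1 p.2.1 (k.succ : ℕ) : ℤ)) - ((W p.1 p.2.1 (k.castSucc : ℕ) : ℤ))| = 1
    rw [hsucc, hcast]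
    exact step_adj _ _⟩
  left_inv := by
    rintro ⟨w, hw⟩
    ext j : 2
    have hb : (fun j : Fin (n+1) => W (half (w 0)) (fun i => cls (w i)) (j : ℕ)) = w := by
      apply inj_aux _ w _ hw
      · show half (W _ _ ((0 : Fin (n+1)) : ℕ)) = half (w 0)
        simp [W, start_half]
      · intro j
        show cls (W _ _ (j : ℕ)) = cls (w j)
        rw [W_cls (n := n) (half (w 0)) (fun i => cls (w i))
          (fun k => adj_not_both (w k.castSucc) (w k.succ) (hw k)) (j : ℕ)
          (Nat.lt_succ_iff.mp j.isLt)]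
        simp [uext, j.isLt]
      · intro k
        have hsucc : ((k.succ : Fin (n+1)) : ℕ) = (k : ℕ) + 1 := rfl
        have hcast : ((k.castSucc : Fin (n+1)) : ℕ) = (k : ℕ) := rfl
        show |((W _ _ (k.succ : ℕ) : ℤ)) - ((W _ _ (k.castSucc : ℕ) : ℤ))| = 1
        rw [hsucc, hcast]
        exact step_adj _ _
    exact congrFun hb j
  right_inv := by
    rintro ⟨b, u, hu⟩
    refine Prod.ext ?_ (Subtype.ext ?_)
    · show half (W b u ((0 : Fin (n+1)) : ℕ)) = b
      simp [W, start_half]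
    · funext j
      show cls (W b u (j : ℕ)) = u j
      rw [W_cls b u hu j (Nat.lt_succ_iff.mp j.isLt)]
      simp [uext, j.isLt]

end QCAux

/-- For every `n ≥ 0`, the number of one-dimensional `Q`-charge words with `n`
steps is exactly twice the number of one-dimensional `p`-`i` words with `n`
steps. -/
theorem qChargeWordCount_eq_two_mul_piWordCount (n : ℕ) :
    qChargeWordCount n = 2 * piWordCount n := by
  unfold qChargeWordCount piWordCount
  rw [Nat.card_congr QCAux.E, Nat.card_prod]
  simp [Nat.card_eq_fintype_card]
end

section
/- For the two-dimensional lattice, the growth rate of the charge(3) model is at least that of the even model: limsup_{N→∞} (Zc3(N))^(1/N²) ≥ limsup_{N→∞} (Zeven(N))^(1/N²). -/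
open Filter

/-- Alternating sum over a finite set of naturals in which consecutive elements
have odd difference: the sum is `0` or `(-1)^max`. -/
lemma alt_sum_aux (F : Finset ℕ)
    (h : ∀ p ∈ F, ∀ q ∈ F, p < q → (∀ r ∈ F, ¬(p < r ∧ r < q)) → Odd (q - p)) :
    (∑ j ∈ F, (-1:ℤ)^j) = 0 ∨
      ∃ m ∈ F, (∀ x ∈ F, x ≤ m) ∧ (∑ j ∈ F, (-1:ℤ)^j) = (-1)^m := by
  induction F using Finset.strongInduction with
  | _ F ih =>
    rcases F.eq_empty_or_nonempty with rfl | hne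
    · left; simp
    · set m := F.max' hne with hm
      have hmF : m ∈ F := F.max'_mem hne
      have hsum : ∑ j ∈ F, (-1:ℤ)^j = (∑ j ∈ F.erase m, (-1:ℤ)^j) + (-1)^m :=
        (Finset.sum_erase_add F _ hmF).symm
      have hsub : F.erase m ⊂ F := Finset.erase_ssubset hmF
      have h' : ∀ p ∈ F.erase m, ∀ q ∈ F.erase m, p < q →
          (∀ r ∈ F.erase m, ¬(p < r ∧ r < q)) → Odd (q - p) := by
        intro p hp q hq hpq hno
        refine h p (Finset.mem_of_mem_erase hp) q (Finset.mem_of_mem_erase hq) hpq ?_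
        intro r hr ⟨h1, h2⟩
        rcases eq_or_ne r m with rfl | hrm
        · exact absurd (F.le_max' q (Finset.mem_of_mem_erase hq)) (not_le.mpr h2)
        · exact hno r (Finset.mem_erase.mpr ⟨hrm, hr⟩) ⟨h1, h2⟩
      rcases ih _ hsub h' with h0 | ⟨m', hm'F, hm'max, heq⟩
      · right
        exact ⟨m, hmF, fun x hx => F.le_max' x hx, by rw [hsum, h0, zero_add]⟩
      · have hm'F2 : m' ∈ F := Finset.mem_of_mem_erase hm'F
        have hlt : m' < m :=
          lt_of_le_of_ne (F.le_max' _ hm'F2) (Finset.mem_erase.mp hm'F).1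
        have hcons : ∀ r ∈ F, ¬(m' < r ∧ r < m) := by
          rintro r hr ⟨h1, h2⟩
          have hrE : r ∈ F.erase m := Finset.mem_erase.mpr ⟨ne_of_lt h2, hr⟩
          exact absurd (hm'max r hrE) (not_le.mpr h1)
        have hodd : Odd (m - m') := h m' hm'F2 m hmF hlt hcons
        have hpow : ((-1:ℤ))^m = -(-1)^m' := by
          have hmeq : m = m' + (m - m') := (Nat.add_sub_cancel' hlt.le).symm
          rw [hmeq, pow_add, hodd.neg_one_pow]
          ring
        left
        rw [hsum, heq, hpow]; ring

lemma alt_sum_abs_le (F : Finset ℕ)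
    (h : ∀ p ∈ F, ∀ q ∈ F, p < q → (∀ r ∈ F, ¬(p < r ∧ r < q)) → Odd (q - p)) :
    |∑ j ∈ F, (-1:ℤ)^j| ≤ 1 := by
  rcases alt_sum_aux F h with h0 | ⟨m, _, _, heq⟩
  · rw [h0]; simp
  · rw [heq, abs_pow]; simp

/-- Key row bound: the even constraint implies alternating partial sums are
bounded by 3. -/
lemma row_bound {N : ℕ} (t : Fin N → Bool)
    (ht : ∀ a b : Fin N, a < b → t a = false → t b = false →
      (∀ c : Fin N, a < c → c < b → t c = true) → Even ((b : ℕ) - a - 1))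
    (u v : Fin N) :
    |∑ j ∈ Finset.Icc u v, (-1:ℤ)^(j:ℕ) * (if t j then 1 else -1)| ≤ 3 := by
  have hsplit : ∑ j ∈ Finset.Icc u v, (-1:ℤ)^(j:ℕ) * (if t j then 1 else -1)
      = (∑ j ∈ Finset.Icc u v, (-1:ℤ)^(j:ℕ))
        + ∑ j ∈ Finset.Icc u v, (if t j = false then (-2:ℤ)*(-1)^(j:ℕ) else 0) := by
    rw [← Finset.sum_add_distrib]
    refine Finset.sum_congr rfl fun j _ => ?_
    cases hj : t j <;> simp <;> ring
  rw [hsplit]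
  -- Bound the first sum
  have hA : |∑ j ∈ Finset.Icc u v, (-1:ℤ)^(j:ℕ)| ≤ 1 := by
    have hmap : ∑ j ∈ Finset.Icc u v, (-1:ℤ)^(j:ℕ)
        = ∑ j ∈ Finset.Icc (u:ℕ) (v:ℕ), (-1:ℤ)^j := by
      rw [← Fin.map_valEmbedding_Icc, Finset.sum_map]
      rfl
    rw [hmap]
    refine alt_sum_abs_le _ ?_
    intro p hp q hq hpq hno
    have hq' : q ≤ (v:ℕ) := (Finset.mem_Icc.mp hq).2
    have hp' : (u:ℕ) ≤ p := (Finset.mem_Icc.mp hp).1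
    have hq1 : q = p + 1 := by
      by_contra hne
      have h1 : p + 1 < q := by omega
      exact hno (p+1) (Finset.mem_Icc.mpr ⟨by omega, by omega⟩) ⟨by omega, by omega⟩
    rw [hq1]
    simp [odd_one]
  -- Bound the second sum
  have hB : |∑ j ∈ Finset.Icc u v, (if t j = false then (-2:ℤ)*(-1)^(j:ℕ) else 0)| ≤ 2 := by
    have hfil : ∑ j ∈ Finset.Icc u v, (if t j = false then (-2:ℤ)*(-1)^(j:ℕ) else 0)
        = ∑ j ∈ (Finset.Icc u v).filter (fun j => t j = false), (-2:ℤ)*(-1)^(j:ℕ) := by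
      rw [Finset.sum_filter]
    set F : Finset (Fin N) := (Finset.Icc u v).filter (fun j => t j = false) with hF
    have himg : ∑ j ∈ F, (-2:ℤ)*(-1)^(j:ℕ)
        = ∑ j ∈ F.image Fin.val, (-2:ℤ)*(-1)^j := by
      rw [Finset.sum_image (fun a _ b _ h => Fin.val_injective h)]
    rw [hfil, himg, ← Finset.mul_sum, abs_mul]
    have : |(-2:ℤ)| = 2 := by norm_num
    rw [this]
    have hkey : |∑ j ∈ F.image Fin.val, (-1:ℤ)^j| ≤ 1 := by
      refine alt_sum_abs_le _ ?_
      intro p hp q hq hpq hno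
      obtain ⟨p', hp'F, rfl⟩ := Finset.mem_image.mp hp
      obtain ⟨q', hq'F, rfl⟩ := Finset.mem_image.mp hq
      have hp'1 := Finset.mem_filter.mp hp'F
      have hq'1 := Finset.mem_filter.mp hq'F
      have hp'I := Finset.mem_Icc.mp hp'1.1
      have hq'I := Finset.mem_Icc.mp hq'1.1
      have hlt : p' < q' := hpq
      have hall : ∀ c : Fin N, p' < c → c < q' → t c = true := by
        intro c hc1 hc2
        by_contra hc
        have hcf : t c = false := by simpa using hc
        have hcF : c ∈ F := Finset.mem_filter.mpr
          ⟨Finset.mem_Icc.mpr ⟨le_trans hp'I.1 (le_of_lt hc1), le_trans (le_of_lt hc2) hq'I.2⟩, hcf⟩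
        exact hno (c:ℕ) (Finset.mem_image.mpr ⟨c, hcF, rfl⟩) ⟨hc1, hc2⟩
      have heven := ht p' q' hlt hp'1.2 hq'1.2 hall
      have hlt' : (p':ℕ) < (q':ℕ) := hlt
      obtain ⟨k, hk⟩ := heven
      exact ⟨k, by omega⟩
    linarith [hkey, abs_nonneg (∑ j ∈ F.image Fin.val, (-1:ℤ)^j)]
  calc |(∑ j ∈ Finset.Icc u v, (-1:ℤ)^(j:ℕ))
        + ∑ j ∈ Finset.Icc u v, (if t j = false then (-2:ℤ)*(-1)^(j:ℕ) else 0)|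
      ≤ _ + _ := abs_add_le _ _
    _ ≤ 3 := by linarith

/-- The spin configuration associated to a boolean configuration. -/
def toSpin {N : ℕ} (x : Fin N × Fin N → Bool) : Fin N × Fin N → ℤ :=
  fun p => (-1)^((p.1:ℕ)+(p.2:ℕ)) * (if x p then 1 else -1)

lemma toSpin_isSpinConfig {N : ℕ} (x : Fin N × Fin N → Bool) :
    IsSpinConfig N (toSpin x) := by
  intro p
  unfold toSpin
  rcases Nat.even_or_odd ((p.1:ℕ)+(p.2:ℕ)) with he | ho
  · rw [he.neg_one_pow]; cases x p <;> simp
  · rw [ho.neg_one_pow]; cases x p <;> simp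

lemma toSpin_charge3 {N : ℕ} (x : Fin N × Fin N → Bool) (hx : EvenConstraint N x) :
    Charge3 N (toSpin x) := by
  constructor
  · intro i a b hab
    have hrow : ∑ j ∈ Finset.Icc a b, toSpin x (i, j)
        = (-1:ℤ)^(i:ℕ) * ∑ j ∈ Finset.Icc a b, (-1:ℤ)^(j:ℕ) * (if x (i, j) then 1 else -1) := by
      rw [Finset.mul_sum]
      refine Finset.sum_congr rfl fun j _ => ?_
      unfold toSpin
      rw [pow_add]; ring
    rw [hrow, abs_mul, abs_pow, abs_neg, abs_one, one_pow, one_mul]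
    exact row_bound (fun j => x (i, j)) (hx.1 i) a b
  · intro j a b hab
    have hcol : ∑ i ∈ Finset.Icc a b, toSpin x (i, j)
        = (-1:ℤ)^(j:ℕ) * ∑ i ∈ Finset.Icc a b, (-1:ℤ)^(i:ℕ) * (if x (i, j) then 1 else -1) := by
      rw [Finset.mul_sum]
      refine Finset.sum_congr rfl fun i _ => ?_
      unfold toSpin
      rw [pow_add]; ring
    rw [hcol, abs_mul, abs_pow, abs_neg, abs_one, one_pow, one_mul]
    exact row_bound (fun i => x (i, j)) (hx.2 j) a b

lemma toSpin_injective {N : ℕ} : Function.Injective (toSpin (N := N)) := by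
  intro x y h
  funext p
  have hp := congrFun h p
  unfold toSpin at hp
  have hne : ((-1:ℤ))^((p.1:ℕ)+(p.2:ℕ)) ≠ 0 := pow_ne_zero _ (by norm_num)
  have := mul_left_cancel₀ hne hp
  cases hx : x p <;> cases hy : y p <;> simp [hx, hy] at this ⊢ <;> omega

lemma charge3_finite (N : ℕ) :
    Finite {x : Fin N × Fin N → ℤ // IsSpinConfig N x ∧ Charge3 N x} := by
  refine Finite.of_injective
    (fun y => (fun p => decide (y.1 p = 1) : Fin N × Fin N → Bool)) ?_
  intro y z h
  apply Subtype.ext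
  funext p
  have hp := congrFun h p
  simp only [decide_eq_decide] at hp
  rcases y.2.1 p with h1 | h1 <;> rcases z.2.1 p with h2 | h2 <;>
    rw [h1, h2] <;> rw [h1, h2] at hp <;> simp_all

lemma zeven_le_zc3 (N : ℕ) : Zeven N ≤ Zc3 N := by
  have : Finite {x : Fin N × Fin N → ℤ // IsSpinConfig N x ∧ Charge3 N x} :=
    charge3_finite N
  refine Nat.card_le_card_of_injective
    (fun x => (⟨toSpin x.1, toSpin_isSpinConfig x.1, toSpin_charge3 x.1 x.2⟩ :
        {y : Fin N × Fin N → ℤ // IsSpinConfig N y ∧ Charge3 N y})) ?_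
  intro x y h
  exact Subtype.ext (toSpin_injective (congrArg Subtype.val h))

lemma zc3_le (N : ℕ) : Zc3 N ≤ 2 ^ (N^2) := by
  have : Finite {x : Fin N × Fin N → ℤ // IsSpinConfig N x ∧ Charge3 N x} :=
    charge3_finite N
  have hinj : Function.Injective
      (fun (y : {x : Fin N × Fin N → ℤ // IsSpinConfig N x ∧ Charge3 N x}) =>
        (fun p => decide (y.1 p = 1) : Fin N × Fin N → Bool)) := by
    intro y z h
    apply Subtype.ext
    funext p
    have hp := congrFun h p
    simp only [decide_eq_decide] at hp
    rcases y.2.1 p with h1 | h1 <;> rcases z.2.1 p with h2 | h2 <;>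
      rw [h1, h2] <;> rw [h1, h2] at hp <;> simp_all
  have := Nat.card_le_card_of_injective _ hinj
  calc Zc3 N ≤ Nat.card (Fin N × Fin N → Bool) := this
    _ = 2 ^ (N^2) := by
        simp [Nat.card_eq_fintype_card, Fintype.card_fun]
        ring

lemma rpow_bound (N : ℕ) : (Zc3 N : ℝ) ^ (1 / (N : ℝ) ^ 2) ≤ 2 := by
  rcases Nat.eq_zero_or_pos N with rfl | hN
  · norm_num
  · have ha0 : (0:ℝ) < (N:ℝ)^2 := by positivity
    have key : ((2:ℝ) ^ (N^2 : ℕ)) ^ (1 / (N:ℝ)^2) = 2 := by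
      rw [← Real.rpow_natCast (2:ℝ) (N^2), ← Real.rpow_mul (by norm_num : (0:ℝ) ≤ 2)]
      have h1 : ((N^2 : ℕ) : ℝ) * (1 / (N:ℝ)^2) = 1 := by
        push_cast
        field_simp
      rw [h1, Real.rpow_one]
    calc (Zc3 N : ℝ) ^ (1 / (N:ℝ)^2)
        ≤ ((2:ℝ) ^ (N^2 : ℕ)) ^ (1 / (N:ℝ)^2) :=
          Real.rpow_le_rpow (by positivity) (by exact_mod_cast zc3_le N) (by positivity)
      _ = 2 := key

/-- On the two-dimensional lattice the growth rate of the charge(3) model is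
at least that of the even model. -/
theorem even_growth_le_charge3_growth :
    limsup (fun N : ℕ => (Zeven N : ℝ) ^ (1 / (N : ℝ) ^ 2)) atTop ≤
      limsup (fun N : ℕ => (Zc3 N : ℝ) ^ (1 / (N : ℝ) ^ 2)) atTop := by
  refine Filter.limsup_le_limsup ?_ ?_ ?_
  · refine Filter.Eventually.of_forall fun N => ?_
    exact Real.rpow_le_rpow (by positivity) (Nat.cast_le.mpr (zeven_le_zc3 N)) (by positivity)
  · exact Filter.isCoboundedUnder_le_of_le atTop (fun N => by positivity)
  · exact Filter.isBoundedUnder_of ⟨2, fun N => rpow_bound N⟩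
end

section
/- With ψ and R as defined, for every m ≥ 1 one has Σ_σ ψ(σ)² = Tr(R^m), where the sum runs over all σ : Fin m → Fin 2. -/
open Matrix Finset

section aux
variable {ι : Type*} [Fintype ι] [DecidableEq ι]

lemma prod_mulVec_entry : ∀ (m : ℕ) (L : Fin m → Matrix ι ι ℝ) (x : ι) (w : ι → ℝ),
    ((List.ofFn L).prod.mulVec w) x =
      ∑ f : Fin m → ι,
        (∏ i : Fin m, L i (Fin.cons (α := fun _ => ι) x f i.castSucc)
            (Fin.cons (α := fun _ => ι) x f i.succ)) *
          w (Fin.cons (α := fun _ => ι) x f (Fin.last m)) := by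
  intro m
  induction m with
  | zero =>
    intro L x w
    simp [Matrix.one_mulVec]
  | succ m ih =>
    intro L x w
    have key : ∀ (z : ι) (g : Fin m → ι),
        (∏ i : Fin (m+1), L i (Fin.cons (α := fun _ => ι) x (Fin.cons (α := fun _ => ι) z g) i.castSucc)
          (Fin.cons (α := fun _ => ι) x (Fin.cons (α := fun _ => ι) z g) i.succ)) *
          w (Fin.cons (α := fun _ => ι) x (Fin.cons (α := fun _ => ι) z g) (Fin.last (m+1)))
        = L 0 x z * ((∏ i : Fin m, L i.succ (Fin.cons (α := fun _ => ι) z g i.castSucc)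
            (Fin.cons (α := fun _ => ι) z g i.succ)) * w (Fin.cons (α := fun _ => ι) z g (Fin.last m))) := by
      intro z g
      rw [Fin.prod_univ_succ, ← Fin.succ_last, Fin.cons_succ, mul_assoc]
      congr 2
      all_goals
        refine Finset.prod_congr rfl fun i _ => ?_
        rw [← Fin.succ_castSucc, Fin.cons_succ, Fin.cons_succ]
    calc ((List.ofFn L).prod.mulVec w) x
        = ∑ z, L 0 x z * ((List.ofFn fun i : Fin m => L i.succ).prod.mulVec w) z := by
          rw [List.ofFn_succ, List.prod_cons, ← Matrix.mulVec_mulVec]; rfl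
      _ = ∑ z, ∑ g : Fin m → ι, L 0 x z *
            ((∏ i : Fin m, L i.succ (Fin.cons (α := fun _ => ι) z g i.castSucc)
              (Fin.cons (α := fun _ => ι) z g i.succ)) *
              w (Fin.cons (α := fun _ => ι) z g (Fin.last m))) := by
          simp_rw [ih (fun i => L i.succ)]
          simp [Finset.mul_sum]
      _ = ∑ t : ι × (Fin m → ι), L 0 x t.1 *
            ((∏ i : Fin m, L i.succ (Fin.cons (α := fun _ => ι) t.1 t.2 i.castSucc)
              (Fin.cons (α := fun _ => ι) t.1 t.2 i.succ)) *
              w (Fin.cons (α := fun _ => ι) t.1 t.2 (Fin.last m))) := by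
          rw [Fintype.sum_prod_type]
      _ = ∑ f : Fin (m+1) → ι,
            (∏ i : Fin (m+1), L i (Fin.cons (α := fun _ => ι) x f i.castSucc)
              (Fin.cons (α := fun _ => ι) x f i.succ)) *
              w (Fin.cons (α := fun _ => ι) x f (Fin.last (m+1))) := by
          refine Fintype.sum_equiv (Fin.consEquiv (fun _ : Fin (m+1) => ι)) _ _ fun t => ?_
          obtain ⟨z, g⟩ := t
          rw [show (Fin.consEquiv fun _ : Fin (m+1) => ι) (z, g)
              = Fin.cons (α := fun _ => ι) z g from rfl]
          exact (key z g).symm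

lemma cons_rot (k : ℕ) (h : Fin (k+1) → ι) (i : Fin (k+1)) :
    Fin.cons (α := fun _ => ι) (h 0) (fun j => h (finRotate (k+1) j)) i.castSucc = h i := by
  induction i using Fin.cases with
  | zero => simp
  | succ j =>
    rw [← Fin.succ_castSucc, Fin.cons_succ, finRotate_succ_apply, Fin.coeSucc_eq_succ]

lemma trace_cyclic (k : ℕ) (L : Fin (k+1) → Matrix ι ι ℝ) :
    Matrix.trace (List.ofFn L).prod =
      ∑ h : Fin (k+1) → ι, ∏ i, L i (h i) (h (finRotate (k+1) i)) := by
  have hP : ∀ x : ι, (List.ofFn L).prod x x =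
      ((List.ofFn L).prod.mulVec (fun j => if j = x then (1:ℝ) else 0)) x := by
    intro x
    simp [Matrix.mulVec, dotProduct]
  have h0 : Matrix.trace (List.ofFn L).prod = ∑ x : ι, (List.ofFn L).prod x x := rfl
  rw [h0]
  simp_rw [hP, prod_mulVec_entry]
  simp only [← Fin.succ_last, Fin.cons_succ, mul_ite, mul_one, mul_zero]
  rw [Finset.sum_comm]
  simp_rw [Finset.sum_ite_eq, Finset.mem_univ, if_true]
  refine Eq.symm (Fintype.sum_equiv (Equiv.arrowCongr (finRotate (k+1)).symm (Equiv.refl ι))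
    _ _ fun h => ?_)
  have he : (Equiv.arrowCongr (finRotate (k+1)).symm (Equiv.refl ι)) h
      = fun j => h (finRotate (k+1) j) := rfl
  rw [he]
  beta_reduce
  have hx : h (finRotate (k+1) (Fin.last k)) = h 0 := by rw [finRotate_last]
  rw [hx]
  refine Finset.prod_congr rfl fun i _ => ?_
  rw [cons_rot]

end aux

/-- `ψ(σ)` is the trace of the cyclic product
`F(σ₀,σ₁) F(σ₁,σ₂) ⋯ F(σ_{m-1},σ₀)`; the cyclic successor is given by
`finRotate`. -/
noncomputable def psiVec {n : ℕ} (m : ℕ)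
    (F : Fin 2 → Fin 2 → Matrix (Fin n) (Fin n) ℝ)
    (σ : Fin m → Fin 2) : ℝ :=
  Matrix.trace (List.ofFn fun i : Fin m => F (σ i) (σ (finRotate m i))).prod

/-- The matrix `R`, indexed by `Fin n × Fin 2 × Fin n`, with
`R((α,a,α'),(β,b,β')) = F(a,b)(α,β) · F(a,b)(α',β')`. -/
def Rmat (n : ℕ) (F : Fin 2 → Fin 2 → Matrix (Fin n) (Fin n) ℝ) :
    Matrix (Fin n × Fin 2 × Fin n) (Fin n × Fin 2 × Fin n) ℝ :=
  Matrix.of fun p q => F p.2.1 q.2.1 p.1 q.1 * F p.2.1 q.2.1 p.2.2 q.2.2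

/-- Split a function into a triple of coordinate functions. -/
def tripleEquiv (m n : ℕ) :
    ((Fin m → Fin n) × (Fin m → Fin 2) × (Fin m → Fin n)) ≃ (Fin m → Fin n × Fin 2 × Fin n) where
  toFun t := fun i => (t.1 i, t.2.1 i, t.2.2 i)
  invFun p := (fun i => (p i).1, fun i => (p i).2.1, fun i => (p i).2.2)
  left_inv t := rfl
  right_inv p := rfl

/-- For all `n, m ≥ 1`: `Σ_σ ψ(σ)² = Tr(R^m)`. -/
theorem sum_psi_sq_eq_trace_pow (n m : ℕ) (hn : 1 ≤ n) (hm : 1 ≤ m)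
    (F : Fin 2 → Fin 2 → Matrix (Fin n) (Fin n) ℝ) :
    ∑ σ : Fin m → Fin 2, (psiVec m F σ) ^ 2 = Matrix.trace (Rmat n F ^ m) := by
  obtain ⟨k, rfl⟩ : ∃ k, m = k + 1 := ⟨m - 1, by omega⟩
  have hpsi : ∀ σ : Fin (k+1) → Fin 2, psiVec (k+1) F σ =
      ∑ x : Fin (k+1) → Fin n, ∏ i, F (σ i) (σ (finRotate (k+1) i)) (x i)
        (x (finRotate (k+1) i)) := fun σ => trace_cyclic k _
  have hR : Matrix.trace (Rmat n F ^ (k+1)) =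
      ∑ p : Fin (k+1) → Fin n × Fin 2 × Fin n,
        ∏ i, Rmat n F (p i) (p (finRotate (k+1) i)) := by
    rw [← List.prod_replicate, ← List.ofFn_const (k+1) (Rmat n F), trace_cyclic]
  have e1 : ∑ p : Fin (k+1) → Fin n × Fin 2 × Fin n,
        ∏ i, Rmat n F (p i) (p (finRotate (k+1) i))
      = ∑ t : (Fin (k+1) → Fin n) × (Fin (k+1) → Fin 2) × (Fin (k+1) → Fin n),
          ∏ i, Rmat n F (tripleEquiv (k+1) n t i)
            (tripleEquiv (k+1) n t (finRotate (k+1) i)) :=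
    (Fintype.sum_equiv (tripleEquiv (k+1) n) _ _ fun t => rfl).symm
  rw [hR, e1]
  simp_rw [Fintype.sum_prod_type]
  rw [Finset.sum_comm]
  refine Finset.sum_congr rfl fun σ _ => ?_
  rw [hpsi σ, sq, Finset.sum_mul_sum]
  refine Finset.sum_congr rfl fun x _ => ?_
  refine Finset.sum_congr rfl fun y _ => ?_
  rw [← Finset.prod_mul_distrib]
  rfl
end

section
/- With ψ, V and S as defined, for every m ≥ 1 one has ψᵀ V ψ = Tr(S^m); that is, Σ_{σ,τ} ψ(σ) V(σ,τ) ψ(τ) = Tr(S^m), where σ, τ range over all maps Fin m → Fin 2. -/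
/-- The column transfer matrix `V`, indexed by `Fin m → Fin 2`, with
`V(σ,τ) = Π_i ω(σ(i+1),τ(i+1);σ(i),τ(i))` (indices cyclic modulo `m`); the
face weight `ω a b c d` means `ω(a,b;c,d)` with top row `a,b` and bottom row
`c,d`. -/
def Vmat (m : ℕ) (ω : Fin 2 → Fin 2 → Fin 2 → Fin 2 → ℝ) :
    Matrix (Fin m → Fin 2) (Fin m → Fin 2) ℝ :=
  Matrix.of fun σ τ =>
    ∏ i : Fin m, ω (σ (finRotate m i)) (τ (finRotate m i)) (σ i) (τ i)

/-- The matrix `S`, indexed by `Fin n × (Fin 2 × Fin 2) × Fin n`, with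
`S((α,(a,a'),α'),(β,(b,b'),β')) = F(a,b)(α,β) · ω(b,b';a,a') · F(a',b')(α',β')`. -/
def Smat (n : ℕ) (F : Fin 2 → Fin 2 → Matrix (Fin n) (Fin n) ℝ)
    (ω : Fin 2 → Fin 2 → Fin 2 → Fin 2 → ℝ) :
    Matrix (Fin n × (Fin 2 × Fin 2) × Fin n) (Fin n × (Fin 2 × Fin 2) × Fin n) ℝ :=
  Matrix.of fun p q =>
    F p.2.1.1 q.2.1.1 p.1 q.1 * ω q.2.1.1 q.2.1.2 p.2.1.1 p.2.1.2 *
      F p.2.1.2 q.2.1.2 p.2.2 q.2.2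

section Aux

variable {ι : Type*} [Fintype ι] [DecidableEq ι]

private lemma snoc_succ_aux {k : ℕ} (d : Fin (k + 1) → ι) (i : Fin (k + 1)) :
    (Fin.snoc d (d 0) : Fin (k + 2) → ι) i.succ = d (i + 1) := by
  rcases eq_or_ne i (Fin.last k) with h | h
  · subst h
    rw [Fin.succ_last, Fin.last_add_one]
    simp [Fin.snoc_last]
  · have hlt : (i : ℕ) < k := lt_of_le_of_ne (Fin.le_last i) (by
      intro hc; exact h (Fin.ext hc))
    have h1 : i.succ = (i + 1 : Fin (k + 1)).castSucc := by
      apply Fin.ext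
      simp [Fin.val_add_one_of_lt (show i < Fin.last k from hlt)]
    rw [h1, Fin.snoc_castSucc]

private lemma prod_ofFn_apply :
    ∀ (k : ℕ) (M : Fin (k + 1) → Matrix ι ι ℝ) (a b : ι),
    (List.ofFn M).prod a b =
      ∑ c : Fin k → ι, ∏ i : Fin (k + 1),
        M i ((Fin.cons a (Fin.snoc c b) : Fin (k + 2) → ι) i.castSucc)
          ((Fin.cons a (Fin.snoc c b) : Fin (k + 2) → ι) i.succ) := by
  intro k
  induction k with
  | zero =>
    intro M a b
    simp only [List.ofFn_succ, List.ofFn_zero, List.prod_cons, List.prod_nil, mul_one]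
    rw [Fintype.sum_unique, Fin.prod_univ_one]
    congr 1
    all_goals first
      | rfl
      | (rw [Fin.cons_succ]; exact (Fin.snoc_last _ _).symm)
  | succ k ih =>
    intro M a b
    rw [List.ofFn_succ, List.prod_cons, Matrix.mul_apply]
    have key : ∀ j : ι, (List.ofFn fun i => M i.succ).prod j b =
        ∑ c : Fin k → ι, ∏ i : Fin (k + 1),
          M i.succ ((Fin.cons j (Fin.snoc c b) : Fin (k + 2) → ι) i.castSucc)
            ((Fin.cons j (Fin.snoc c b) : Fin (k + 2) → ι) i.succ) :=
      fun j => ih (fun i => M i.succ) j b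
    -- RHS: reindex over c' : Fin (k+1) → ι  as  (j, c)
    rw [show (∑ c : Fin (k + 1) → ι, ∏ i : Fin (k + 2),
        M i ((Fin.cons a (Fin.snoc c b) : Fin (k + 3) → ι) i.castSucc)
          ((Fin.cons a (Fin.snoc c b) : Fin (k + 3) → ι) i.succ)) =
        ∑ x : ι × (Fin k → ι), ∏ i : Fin (k + 2),
        M i ((Fin.cons a (Fin.snoc (Fin.cons x.1 x.2) b) : Fin (k + 3) → ι) i.castSucc)
          ((Fin.cons a (Fin.snoc (Fin.cons x.1 x.2) b) : Fin (k + 3) → ι) i.succ) from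
      (Fintype.sum_equiv (Fin.consEquiv fun _ => ι) _ _ (fun x => rfl)).symm]
    rw [Fintype.sum_prod_type, Finset.sum_congr rfl]
    intro j _
    rw [key j, Finset.mul_sum]
    apply Finset.sum_congr rfl
    intro c _
    conv_rhs => rw [← Fin.cons_snoc_eq_snoc_cons, Fin.prod_univ_succ]
    congr 1
    all_goals first
      | rfl
      | (congr 1 <;> rfl)
      | (apply Finset.prod_congr rfl
         intro i _
         conv_rhs => rw [← Fin.succ_castSucc, Fin.cons_succ, Fin.cons_succ])

private lemma trace_ofFn_prod (k : ℕ) (M : Fin (k + 1) → Matrix ι ι ℝ) :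
    Matrix.trace (List.ofFn M).prod =
      ∑ d : Fin (k + 1) → ι, ∏ i : Fin (k + 1), M i (d i) (d (finRotate (k + 1) i)) := by
  rw [Matrix.trace]
  have : ∀ a : ι, (List.ofFn M).prod a a =
      ∑ c : Fin k → ι, ∏ i : Fin (k + 1),
        M i ((Fin.cons a (Fin.snoc c a) : Fin (k + 2) → ι) i.castSucc)
          ((Fin.cons a (Fin.snoc c a) : Fin (k + 2) → ι) i.succ) :=
    fun a => prod_ofFn_apply k M a a
  simp only [Matrix.diag_apply, this]
  rw [show (∑ d : Fin (k + 1) → ι, ∏ i : Fin (k + 1), M i (d i) (d (finRotate (k + 1) i))) =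
      ∑ x : ι × (Fin k → ι), ∏ i : Fin (k + 1),
        M i ((Fin.cons x.1 x.2 : Fin (k+1) → ι) i)
          ((Fin.cons x.1 x.2 : Fin (k+1) → ι) (finRotate (k + 1) i)) from
    (Fintype.sum_equiv (Fin.consEquiv fun _ => ι) _ _ (fun x => rfl)).symm]
  rw [Fintype.sum_prod_type]
  apply Finset.sum_congr rfl; intro a _
  apply Finset.sum_congr rfl; intro c _
  apply Finset.prod_congr rfl; intro i _
  have hd0 : (Fin.cons a c : Fin (k+1) → ι) 0 = a := rfl
  have hpath : (Fin.cons a (Fin.snoc c a) : Fin (k + 2) → ι)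
      = Fin.snoc (Fin.cons a c) ((Fin.cons a c : Fin (k+1) → ι) 0) := by
    rw [hd0, Fin.cons_snoc_eq_snoc_cons]
  rw [hpath, Fin.snoc_castSucc, snoc_succ_aux, finRotate_succ_apply]

end Aux

/-- For all `n, m ≥ 1`: `ψᵀ V ψ = Tr(S^m)`. -/
theorem psi_V_psi_eq_trace_pow (n m : ℕ) (hn : 1 ≤ n) (hm : 1 ≤ m)
    (F : Fin 2 → Fin 2 → Matrix (Fin n) (Fin n) ℝ)
    (ω : Fin 2 → Fin 2 → Fin 2 → Fin 2 → ℝ) :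
    ∑ σ : Fin m → Fin 2, ∑ τ : Fin m → Fin 2,
      psiVec m F σ * Vmat m ω σ τ * psiVec m F τ =
    Matrix.trace (Smat n F ω ^ m) := by
  obtain ⟨k, rfl⟩ : ∃ k, m = k + 1 := ⟨m - 1, (Nat.succ_pred_eq_of_pos hm).symm⟩
  set m := k + 1
  -- expand RHS
  have hS : Matrix.trace (Smat n F ω ^ m) =
      ∑ p : Fin m → Fin n × (Fin 2 × Fin 2) × Fin n,
        ∏ i : Fin m, Smat n F ω (p i) (p (finRotate m i)) := by
    rw [← List.prod_replicate m (Smat n F ω), ← List.ofFn_const m (Smat n F ω)]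
    exact trace_ofFn_prod k _
  rw [hS]
  -- reindex RHS over quadruples
  let e : ((Fin m → Fin n) × (Fin m → Fin 2) × (Fin m → Fin 2) × (Fin m → Fin n)) ≃
      (Fin m → Fin n × (Fin 2 × Fin 2) × Fin n) :=
    { toFun := fun x i => (x.1 i, (x.2.1 i, x.2.2.1 i), x.2.2.2 i)
      invFun := fun p => (fun i => (p i).1, fun i => (p i).2.1.1,
        fun i => (p i).2.1.2, fun i => (p i).2.2)
      left_inv := fun x => rfl
      right_inv := fun p => rfl }
  rw [← Equiv.sum_comp e (fun p => ∏ i : Fin m, Smat n F ω (p i) (p (finRotate m i)))]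
  -- expand psiVec
  have hpsi : ∀ σ : Fin m → Fin 2, psiVec m F σ =
      ∑ α : Fin m → Fin n, ∏ i : Fin m,
        F (σ i) (σ (finRotate m i)) (α i) (α (finRotate m i)) := by
    intro σ
    exact trace_ofFn_prod k _
  simp only [e, Equiv.coe_fn_mk, Smat, Matrix.of_apply, Finset.prod_mul_distrib,
    Fintype.sum_prod_type]
  conv_rhs => rw [Finset.sum_comm]
  simp only [hpsi, Vmat, Matrix.of_apply, Finset.sum_mul, Finset.mul_sum]
  apply Finset.sum_congr rfl; intro σ _
  conv_rhs => rw [Finset.sum_comm]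
  apply Finset.sum_congr rfl; intro τ _
  conv_lhs => rw [Finset.sum_comm]
end
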